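/- arXiv:1709.01864 — 4 statements merged into one kernel-verified Lean document; each statement's English description precedes it below -/
import Mathlib

section
/- Let U be a sub-Markovian resolvent with sub-invariant σ-finite measure m and weak dual resolvent Û. A function u ∈ L^p(E,m) is U-invariant if and only if it is Û-invariant. -/
open MeasureTheory ProbabilityTheory Filter
open scoped NNReal ENNReal

/-- The resolvent operators acting on real functions: `U_α f (x) = ∫ f d(U α x)`. -/
noncomputable def Uop {E : Type*} [MeasurableSpace E]
    (U : ℝ → Kernel E E) (α : ℝ) (f : E → ℝ) (x : E) : ℝ :=
  ∫ y, f y ∂(U α x)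

/-- `(U_α)` is a sub-Markovian resolvent of kernels: `α U_α 1 ≤ 1`. -/
def SubMarkovResolvent {E : Type*} [MeasurableSpace E] (U : ℝ → Kernel E E) : Prop :=
  ∀ α > (0:ℝ), ∀ x : E, (U α x) Set.univ ≤ ENNReal.ofReal α⁻¹

/-- `m` is sub-invariant for `(U_α)`: `m(α U_α f) ≤ m(f)` for all `f ≥ 0` measurable. -/
def SubInvariantMeasure {E : Type*} [MeasurableSpace E]
    (m : Measure E) (U : ℝ → Kernel E E) : Prop :=
  ∀ α > (0:ℝ), ∀ f : E → ℝ≥0∞, Measurable f →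
    ∫⁻ x, ENNReal.ofReal α * ∫⁻ y, f y ∂(U α x) ∂m ≤ ∫⁻ x, f x ∂m

/-- Weak duality of `(U_α)` and `(Û_α)` w.r.t. `m`: `∫ f U_α g dm = ∫ g Û_α f dm`. -/
def WeakDuality {E : Type*} [MeasurableSpace E]
    (m : Measure E) (U Uhat : ℝ → Kernel E E) : Prop :=
  ∀ α > (0:ℝ), ∀ f g : E → ℝ≥0∞, Measurable f → Measurable g →
    ∫⁻ x, f x * ∫⁻ y, g y ∂(U α x) ∂m = ∫⁻ x, g x * ∫⁻ y, f y ∂(Uhat α x) ∂m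

/-- `u` is `U`-invariant: `U_α(uf) = u U_α f` m-a.e. for all bounded measurable `f`, `α > 0`. -/
def UInvariant {E : Type*} [MeasurableSpace E]
    (m : Measure E) (U : ℝ → Kernel E E) (u : E → ℝ) : Prop :=
  ∀ α > (0:ℝ), ∀ f : E → ℝ, Measurable f → (∃ C, ∀ x, |f x| ≤ C) →
    Uop U α (fun y => u y * f y) =ᵐ[m] fun x => u x * Uop U α f x

/- ### Auxiliary lemmas -/

private lemma ofReal_max_zero' (t : ℝ) : ENNReal.ofReal (max t 0) = ENNReal.ofReal t := by
  rcases le_total t 0 with h | h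
  · rw [max_eq_right h, ENNReal.ofReal_of_nonpos h, ENNReal.ofReal_zero]
  · rw [max_eq_left h]

private lemma max_zero_eq' (t : ℝ) : max t 0 = (|t| + t) / 2 := by
  rcases le_total 0 t with h | h
  · rw [max_eq_left h, abs_of_nonneg h]; ring
  · rw [max_eq_right h, abs_of_nonpos h]; ring

private lemma max_neg_zero_eq' (t : ℝ) : max (-t) 0 = (|t| - t) / 2 := by
  rcases le_total 0 t with h | h
  · rw [max_eq_right (neg_nonpos.mpr h), abs_of_nonneg h]; ring
  · rw [max_eq_left (neg_nonneg.mpr h), abs_of_nonpos h]; ring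

private lemma ofReal_mul_split (s t : ℝ) :
    ENNReal.ofReal (s * t)
      = ENNReal.ofReal t * ENNReal.ofReal s + ENNReal.ofReal (-t) * ENNReal.ofReal (-s) := by
  rcases le_total 0 s with hs | hs <;> rcases le_total 0 t with ht | ht
  · rw [mul_comm s t, ENNReal.ofReal_mul ht, ENNReal.ofReal_of_nonpos (neg_nonpos.mpr ht),
      zero_mul, add_zero]
  · rw [ENNReal.ofReal_of_nonpos (by nlinarith : s * t ≤ 0), ENNReal.ofReal_of_nonpos ht,
      ENNReal.ofReal_of_nonpos (neg_nonpos.mpr hs), zero_mul, mul_zero, add_zero]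
  · rw [ENNReal.ofReal_of_nonpos (by nlinarith : s * t ≤ 0), ENNReal.ofReal_of_nonpos hs,
      ENNReal.ofReal_of_nonpos (neg_nonpos.mpr ht), mul_zero, zero_mul, add_zero]
  · rw [ENNReal.ofReal_of_nonpos ht, zero_mul, zero_add,
      ← ENNReal.ofReal_mul (neg_nonneg.mpr ht), neg_mul_neg, mul_comm t s]

private lemma isFiniteKernelMeasure {E : Type*} [MeasurableSpace E] {U : ℝ → Kernel E E}
    (hU : SubMarkovResolvent U) {α : ℝ} (hα : 0 < α) (x : E) : IsFiniteMeasure (U α x) :=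
  ⟨lt_of_le_of_lt (hU α hα x) ENNReal.ofReal_lt_top⟩

private lemma measure_null_of_null_inter {E : Type*} [MeasurableSpace E] {m : Measure E}
    {P : Set E} {S : ℕ → Set E} (hcov : ⋃ k, S k = Set.univ)
    (h : ∀ k, m (P ∩ S k) = 0) : m P = 0 := by
  have hP : P = ⋃ k, P ∩ S k := by rw [← Set.inter_iUnion, hcov, Set.inter_univ]
  rw [hP]; exact measure_iUnion_null h

/-- Measurability of `x ↦ ∫⁻ f d(κ x)` for an arbitrary kernel (no s-finiteness needed). -/
private lemma measurable_kernel_lintegral {E : Type*} [MeasurableSpace E]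
    (κ : Kernel E E) {f : E → ℝ≥0∞} (hf : Measurable f) :
    Measurable fun x => ∫⁻ y, f y ∂(κ x) := by
  have h : ∀ x, ∫⁻ y, f y ∂(κ x) = ⨆ n, (SimpleFunc.eapprox f n).lintegral (κ x) := fun x =>
    lintegral_eq_iSup_eapprox_lintegral hf
  simp_rw [h]
  refine Measurable.iSup fun n => ?_
  have h2 : (fun x => (SimpleFunc.eapprox f n).lintegral (κ x))
      = fun x => ∑ c ∈ (SimpleFunc.eapprox f n).range,
          c * (κ x) ((SimpleFunc.eapprox f n) ⁻¹' {c}) := by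
    funext x; rfl
  rw [h2]
  exact Finset.measurable_sum _ fun c _ =>
    (Kernel.measurable_coe κ ((SimpleFunc.eapprox f n).measurableSet_preimage _)).const_mul c

private lemma uInvariant_congr {E : Type*} [MeasurableSpace E] (m : Measure E)
    (U : ℝ → Kernel E E) (hm : SubInvariantMeasure m U) {u u' : E → ℝ}
    (huu' : u =ᵐ[m] u') (h : UInvariant m U u) : UInvariant m U u' := by
  obtain ⟨N, hNsub, hNmeas, hNnull⟩ := exists_measurable_superset_of_null (ae_iff.mp huu')
  intro α hα f hf hfb
  have hker : ∀ᵐ x ∂m, (U α x) N = 0 := by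
    have h1 := hm α hα (N.indicator 1) (measurable_one.indicator hNmeas)
    have h1' : ∫⁻ x, ENNReal.ofReal α * (U α x) N ∂m = 0 := by
      refine le_antisymm ?_ zero_le
      calc ∫⁻ x, ENNReal.ofReal α * (U α x) N ∂m
          = ∫⁻ x, ENNReal.ofReal α * ∫⁻ y, N.indicator 1 y ∂(U α x) ∂m :=
            lintegral_congr fun x => by rw [lintegral_indicator_one hNmeas]
        _ ≤ ∫⁻ x, N.indicator 1 x ∂m := h1
        _ = m N := lintegral_indicator_one hNmeas
        _ = 0 := hNnull
    have hmeas : Measurable fun x => ENNReal.ofReal α * (U α x) N :=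
      (Kernel.measurable_coe (U α) hNmeas).const_mul _
    filter_upwards [(lintegral_eq_zero_iff hmeas).mp h1'] with x hx
    have hx' : ENNReal.ofReal α * (U α x) N = 0 := hx
    rcases mul_eq_zero.mp hx' with h0 | h0
    · exact absurd h0 (by simp [ENNReal.ofReal_eq_zero, not_le, hα])
    · exact h0
  filter_upwards [h α hα f hf hfb, huu', hker] with x hx hux hNx
  have hae : ∀ᵐ y ∂(U α x), u y = u' y :=
    ae_iff.mpr (measure_mono_null hNsub hNx)
  calc Uop U α (fun y => u' y * f y) x
      = Uop U α (fun y => u y * f y) x := by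
        simp only [Uop]
        exact integral_congr_ae (by filter_upwards [hae] with y hy; rw [hy])
    _ = u x * Uop U α f x := hx
    _ = u' x * Uop U α f x := by rw [hux]

set_option maxHeartbeats 1600000 in
private lemma key_dir {E : Type*} [MeasurableSpace E] (m : Measure E) [SigmaFinite m]
    (U Uhat : ℝ → Kernel E E)
    (hU : SubMarkovResolvent U) (hUhat : SubMarkovResolvent Uhat)
    (hdual : WeakDuality m U Uhat)
    {u : E → ℝ} (hum : Measurable u)
    (hinv : UInvariant m U u) : UInvariant m Uhat u := by
  intro α hα g hg hgb
  obtain ⟨C₀, hC₀⟩ := hgb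
  have hC : ∀ x, |g x| ≤ max C₀ 0 := fun x => le_max_of_le_left (hC₀ x)
  set C : ℝ := max C₀ 0 with hCdef
  have hC0 : 0 ≤ C := le_max_right _ _
  have hdual' : WeakDuality m Uhat U := fun β hβ f₁ g₁ hf₁ hg₁ => (hdual β hβ g₁ f₁ hg₁ hf₁).symm
  -- basic objects
  set w : E → ℝ≥0∞ := fun y => ENNReal.ofReal |u y| with hw
  have hwmeas : Measurable w := ENNReal.measurable_ofReal.comp hum.abs
  set A : ℕ → Set E := fun n => {y | |u y| ≤ (n : ℝ)} with hA
  have hAmeas : ∀ n, MeasurableSet (A n) := fun n => measurableSet_le hum.abs measurable_const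
  have hAmono : Monotone A := fun i j hij y hy => by
    simp only [hA, Set.mem_setOf_eq] at hy ⊢
    exact le_trans hy (Nat.cast_le.mpr hij)
  have hAunion : ⋃ n, A n = Set.univ := by
    ext y
    simp only [Set.mem_iUnion, Set.mem_univ, iff_true, hA, Set.mem_setOf_eq]
    exact exists_nat_ge |u y|
  set av : E → ℝ≥0∞ := fun y => ENNReal.ofReal (u y) with hav
  set bv : E → ℝ≥0∞ := fun y => ENNReal.ofReal (-u y) with hbv
  have havm : Measurable av := ENNReal.measurable_ofReal.comp hum
  have hbvm : Measurable bv := ENNReal.measurable_ofReal.comp hum.neg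
  set γp : E → ℝ≥0∞ := fun y => ENNReal.ofReal (g y) with hγp
  set γm : E → ℝ≥0∞ := fun y => ENNReal.ofReal (-g y) with hγm
  set φp : E → ℝ≥0∞ := fun y => ENNReal.ofReal (u y * g y) with hφp
  set φm : E → ℝ≥0∞ := fun y => ENNReal.ofReal (-(u y * g y)) with hφm
  have hγpm : Measurable γp := ENNReal.measurable_ofReal.comp hg
  have hγmm : Measurable γm := ENNReal.measurable_ofReal.comp hg.neg
  have hφpm : Measurable φp := ENNReal.measurable_ofReal.comp (hum.mul hg)
  have hφmm : Measurable φm := ENNReal.measurable_ofReal.comp (hum.mul hg).neg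
  set Gp : E → ℝ≥0∞ := fun x => ∫⁻ y, γp y ∂(Uhat α x) with hGp
  set Gm : E → ℝ≥0∞ := fun x => ∫⁻ y, γm y ∂(Uhat α x) with hGm
  set Lp : E → ℝ≥0∞ := fun x => ∫⁻ y, φp y ∂(Uhat α x) with hLp
  set Lm : E → ℝ≥0∞ := fun x => ∫⁻ y, φm y ∂(Uhat α x) with hLm
  set NW : E → ℝ≥0∞ := fun x => ∫⁻ y, w y ∂(Uhat α x) with hNW
  have hGpm : Measurable Gp := measurable_kernel_lintegral _ hγpm
  have hGmm : Measurable Gm := measurable_kernel_lintegral _ hγmm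
  have hLpm : Measurable Lp := measurable_kernel_lintegral _ hφpm
  have hLmm : Measurable Lm := measurable_kernel_lintegral _ hφmm
  have hNWm : Measurable NW := measurable_kernel_lintegral _ hwmeas
  -- pointwise bounds
  have hγp_le : ∀ y, γp y ≤ ENNReal.ofReal C := fun y =>
    ENNReal.ofReal_le_ofReal ((le_abs_self _).trans (hC y))
  have hγm_le : ∀ y, γm y ≤ ENNReal.ofReal C := fun y =>
    ENNReal.ofReal_le_ofReal ((neg_le_abs _).trans (hC y))
  have hGp_le : ∀ x, Gp x ≤ ENNReal.ofReal C * ENNReal.ofReal α⁻¹ := fun x => by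
    calc Gp x ≤ ∫⁻ _, ENNReal.ofReal C ∂(Uhat α x) := lintegral_mono hγp_le
      _ = ENNReal.ofReal C * (Uhat α x) Set.univ := lintegral_const _
      _ ≤ _ := mul_le_mul_right (hUhat α hα x) _
  have hGm_le : ∀ x, Gm x ≤ ENNReal.ofReal C * ENNReal.ofReal α⁻¹ := fun x => by
    calc Gm x ≤ ∫⁻ _, ENNReal.ofReal C ∂(Uhat α x) := lintegral_mono hγm_le
      _ = ENNReal.ofReal C * (Uhat α x) Set.univ := lintegral_const _
      _ ≤ _ := mul_le_mul_right (hUhat α hα x) _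
  have hGp_ne : ∀ x, Gp x ≠ ∞ := fun x =>
    ((hGp_le x).trans_lt (ENNReal.mul_lt_top ENNReal.ofReal_lt_top ENNReal.ofReal_lt_top)).ne
  have hGm_ne : ∀ x, Gm x ≠ ∞ := fun x =>
    ((hGm_le x).trans_lt (ENNReal.mul_lt_top ENNReal.ofReal_lt_top ENNReal.ofReal_lt_top)).ne
  have hφp_le : ∀ y, φp y ≤ ENNReal.ofReal C * w y := fun y => by
    calc φp y ≤ ENNReal.ofReal |u y * g y| := ENNReal.ofReal_le_ofReal (le_abs_self _)
      _ ≤ ENNReal.ofReal (C * |u y|) := by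
          refine ENNReal.ofReal_le_ofReal ?_
          rw [abs_mul]
          nlinarith [hC y, abs_nonneg (u y), abs_nonneg (g y)]
      _ = ENNReal.ofReal C * w y := by rw [ENNReal.ofReal_mul hC0]
  have hφm_le : ∀ y, φm y ≤ ENNReal.ofReal C * w y := fun y => by
    calc φm y ≤ ENNReal.ofReal |u y * g y| := by
          refine ENNReal.ofReal_le_ofReal ?_
          rw [← abs_neg]; exact le_abs_self _
      _ ≤ ENNReal.ofReal (C * |u y|) := by
          refine ENNReal.ofReal_le_ofReal ?_
          rw [abs_mul]
          nlinarith [hC y, abs_nonneg (u y), abs_nonneg (g y)]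
      _ = ENNReal.ofReal C * w y := by rw [ENNReal.ofReal_mul hC0]
  have hLp_le : ∀ x, Lp x ≤ ENNReal.ofReal C * NW x := fun x => by
    calc Lp x ≤ ∫⁻ y, ENNReal.ofReal C * w y ∂(Uhat α x) := lintegral_mono hφp_le
      _ = ENNReal.ofReal C * NW x := lintegral_const_mul _ hwmeas
  have hLm_le : ∀ x, Lm x ≤ ENNReal.ofReal C * NW x := fun x => by
    calc Lm x ≤ ∫⁻ y, ENNReal.ofReal C * w y ∂(Uhat α x) := lintegral_mono hφm_le
      _ = ENNReal.ofReal C * NW x := lintegral_const_mul _ hwmeas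
  -- ### L1a : invariance of |u| on indicators
  have L1a : ∀ B : Set E, MeasurableSet B →
      ∀ᵐ x ∂m, ∫⁻ y, B.indicator w y ∂(U α x) = w x * (U α x) B := by
    intro B hB
    have main : ∀ n : ℕ, ∀ᵐ x ∂m,
        w x * (U α x) (B ∩ A n) ≤ ∫⁻ y, (B ∩ A n).indicator w y ∂(U α x) ∧
        ∫⁻ y, (B ∩ A n).indicator w y ∂(U α x) ≤ w x * (U α x) B := by
      intro n
      set Sp : Set E := B ∩ A n ∩ {y | 0 ≤ u y} with hSp
      set Sm : Set E := B ∩ A n ∩ {y | u y < 0} with hSm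
      have hSpm : MeasurableSet Sp :=
        (hB.inter (hAmeas n)).inter (measurableSet_le measurable_const hum)
      have hSmm : MeasurableSet Sm :=
        (hB.inter (hAmeas n)).inter (measurableSet_lt hum measurable_const)
      set fn : E → ℝ := fun y => Sp.indicator (fun _ => (1:ℝ)) y - Sm.indicator (fun _ => (1:ℝ)) y
        with hfn
      have hfnmeas : Measurable fn :=
        (measurable_const.indicator hSpm).sub (measurable_const.indicator hSmm)
      have hfnabs : ∀ y, |fn y| ≤ B.indicator (fun _ => (1:ℝ)) y := by
        intro y
        by_cases hyB : y ∈ B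
        · rw [Set.indicator_of_mem hyB]
          rcases le_or_gt 0 (u y) with hu0 | hu0
          · have hym : y ∉ Sm := fun hc => absurd hc.2 (not_lt.mpr hu0)
            simp only [hfn, Set.indicator_of_notMem hym, sub_zero]
            by_cases h : y ∈ Sp <;> simp [h]
          · have hyp : y ∉ Sp := fun hc => absurd hc.2 (not_le.mpr hu0)
            simp only [hfn, Set.indicator_of_notMem hyp, zero_sub, abs_neg]
            by_cases h : y ∈ Sm <;> simp [h]
        · have hyp : y ∉ Sp := fun hc => hyB hc.1.1
          have hym : y ∉ Sm := fun hc => hyB hc.1.1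
          simp [hfn, Set.indicator_of_notMem, hyp, hym, hyB]
      have hfnabs1 : ∀ y, |fn y| ≤ 1 := fun y =>
        (hfnabs y).trans (by by_cases h : y ∈ B <;> simp [h])
      set fB : E → ℝ := (B ∩ A n).indicator (fun _ => (1:ℝ)) with hfB
      have hfBmeas : Measurable fB := measurable_const.indicator (hB.inter (hAmeas n))
      have hfBbd : ∀ y, |fB y| ≤ 1 := fun y => by
        by_cases hy : y ∈ B ∩ A n <;> simp [hfB, hy]
      have hufn : ∀ y, u y * fn y = (B ∩ A n).indicator (fun z => |u z|) y := by
        intro y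
        by_cases hy : y ∈ B ∩ A n
        · rcases le_or_gt 0 (u y) with hu0 | hu0
          · have hyp : y ∈ Sp := ⟨hy, hu0⟩
            have hym : y ∉ Sm := fun hc => absurd hc.2 (not_lt.mpr hu0)
            simp [hfn, Set.indicator_of_mem hyp, Set.indicator_of_notMem hym,
              Set.indicator_of_mem hy, abs_of_nonneg hu0]
          · have hyp : y ∉ Sp := fun hc => absurd hc.2 (not_le.mpr hu0)
            have hym : y ∈ Sm := ⟨hy, hu0⟩
            simp [hfn, Set.indicator_of_notMem hyp, Set.indicator_of_mem hym,
              Set.indicator_of_mem hy, abs_of_neg hu0]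
        · have hyp : y ∉ Sp := fun hc => hy hc.1
          have hym : y ∉ Sm := fun hc => hy hc.1
          simp [hfn, Set.indicator_of_notMem hyp, Set.indicator_of_notMem hym,
            Set.indicator_of_notMem hy]
      have hufB : ∀ y, u y * fB y = (B ∩ A n).indicator u y := by
        intro y
        by_cases hy : y ∈ B ∩ A n <;>
          simp [hfB, Set.indicator_of_mem, Set.indicator_of_notMem, hy]
      filter_upwards [hinv α hα fn hfnmeas ⟨1, hfnabs1⟩,
        hinv α hα fB hfBmeas ⟨1, hfBbd⟩] with x h₁ h₂
      simp only [Uop] at h₁ h₂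
      haveI : IsFiniteMeasure (U α x) := isFiniteKernelMeasure hU hα x
      have habs_meas : Measurable ((B ∩ A n).indicator (fun z => |u z|)) :=
        hum.abs.indicator (hB.inter (hAmeas n))
      have habs_int : Integrable ((B ∩ A n).indicator (fun z => |u z|)) (U α x) := by
        refine (integrable_const (n:ℝ)).mono' habs_meas.aestronglyMeasurable
          (ae_of_all _ fun y => ?_)
        by_cases hy : y ∈ B ∩ A n
        · rw [Set.indicator_of_mem hy, Real.norm_eq_abs, abs_abs]; exact hy.2
        · simp [Set.indicator_of_notMem hy]
      have hlin : ∫⁻ y, (B ∩ A n).indicator w y ∂(U α x)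
          = ENNReal.ofReal (∫ y, (B ∩ A n).indicator (fun z => |u z|) y ∂(U α x)) := by
        rw [ofReal_integral_eq_lintegral_ofReal habs_int
          (ae_of_all _ fun y => Set.indicator_nonneg (fun _ _ => abs_nonneg _) y)]
        refine lintegral_congr fun y => ?_
        by_cases hy : y ∈ B ∩ A n <;>
          simp [Set.indicator_of_mem, Set.indicator_of_notMem, hy, hw]
      have hIfn : Integrable fn (U α x) :=
        (integrable_const (1:ℝ)).mono' hfnmeas.aestronglyMeasurable
          (ae_of_all _ fun y => by rw [Real.norm_eq_abs]; exact hfnabs1 y)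
      have hindB_int : Integrable (B.indicator (fun _ => (1:ℝ))) (U α x) :=
        (integrable_const (1:ℝ)).mono' (measurable_const.indicator hB).aestronglyMeasurable
          (ae_of_all _ fun y => by by_cases hy : y ∈ B <;> simp [hy])
      have hintfn_le : |∫ y, fn y ∂(U α x)| ≤ ((U α x) B).toReal := by
        calc |∫ y, fn y ∂(U α x)| ≤ ∫ y, |fn y| ∂(U α x) := by
              simpa [Real.norm_eq_abs] using norm_integral_le_integral_norm (μ := U α x) fn
          _ ≤ ∫ y, B.indicator (fun _ => (1:ℝ)) y ∂(U α x) :=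
              integral_mono hIfn.abs hindB_int hfnabs
          _ = ((U α x) B).toReal := by
              simpa [Measure.real, Pi.one_def] using integral_indicator_one (μ := U α x) hB
      constructor
      · -- lower bound
        have hint_u : Integrable ((B ∩ A n).indicator u) (U α x) := by
          refine (integrable_const (n:ℝ)).mono'
            (hum.indicator (hB.inter (hAmeas n))).aestronglyMeasurable
            (ae_of_all _ fun y => ?_)
          by_cases hy : y ∈ B ∩ A n
          · rw [Set.indicator_of_mem hy, Real.norm_eq_abs]; exact hy.2
          · simp [Set.indicator_of_notMem hy]
        have h₂' : ∫ y, (B ∩ A n).indicator u y ∂(U α x)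
            = u x * ((U α x) (B ∩ A n)).toReal := by
          have e1 : ∫ y, (B ∩ A n).indicator u y ∂(U α x) = ∫ y, u y * fB y ∂(U α x) :=
            integral_congr_ae (ae_of_all _ fun y => (hufB y).symm)
          rw [e1, h₂]
          congr 1
          simpa [Measure.real, Pi.one_def, hfB] using integral_indicator_one (μ := U α x) (hB.inter (hAmeas n))
        calc w x * (U α x) (B ∩ A n)
            = ENNReal.ofReal (|u x| * ((U α x) (B ∩ A n)).toReal) := by
              rw [ENNReal.ofReal_mul (abs_nonneg _),
                ENNReal.ofReal_toReal (measure_ne_top _ _)]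
          _ = ENNReal.ofReal |u x * ((U α x) (B ∩ A n)).toReal| := by
              rw [abs_mul, abs_of_nonneg ENNReal.toReal_nonneg]
          _ = ENNReal.ofReal |∫ y, (B ∩ A n).indicator u y ∂(U α x)| := by rw [h₂']
          _ ≤ ENNReal.ofReal (∫ y, (B ∩ A n).indicator (fun z => |u z|) y ∂(U α x)) := by
              refine ENNReal.ofReal_le_ofReal ?_
              calc |∫ y, (B ∩ A n).indicator u y ∂(U α x)|
                  ≤ ∫ y, |(B ∩ A n).indicator u y| ∂(U α x) := by
                    simpa [Real.norm_eq_abs] using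
                      norm_integral_le_integral_norm (μ := U α x) ((B ∩ A n).indicator u)
                _ = ∫ y, (B ∩ A n).indicator (fun z => |u z|) y ∂(U α x) := by
                    refine integral_congr_ae (ae_of_all _ fun y => ?_)
                    by_cases hy : y ∈ B ∩ A n <;>
                      simp [Set.indicator_of_mem, Set.indicator_of_notMem, hy]
          _ = ∫⁻ y, (B ∩ A n).indicator w y ∂(U α x) := hlin.symm
      · -- upper bound
        have h₁' : ∫ y, (B ∩ A n).indicator (fun z => |u z|) y ∂(U α x)
            = u x * ∫ y, fn y ∂(U α x) := by
          rw [← h₁]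
          exact integral_congr_ae (ae_of_all _ fun y => (hufn y).symm)
        rw [hlin]
        calc ENNReal.ofReal (∫ y, (B ∩ A n).indicator (fun z => |u z|) y ∂(U α x))
            = ENNReal.ofReal (u x * ∫ y, fn y ∂(U α x)) := by rw [h₁']
          _ ≤ ENNReal.ofReal (|u x| * ((U α x) B).toReal) := by
              refine ENNReal.ofReal_le_ofReal ?_
              calc u x * ∫ y, fn y ∂(U α x) ≤ |u x * ∫ y, fn y ∂(U α x)| := le_abs_self _
                _ = |u x| * |∫ y, fn y ∂(U α x)| := abs_mul _ _
                _ ≤ |u x| * ((U α x) B).toReal :=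
                    mul_le_mul_of_nonneg_left hintfn_le (abs_nonneg _)
          _ = w x * (U α x) B := by
              rw [ENNReal.ofReal_mul (abs_nonneg _),
                ENNReal.ofReal_toReal (measure_ne_top _ _)]
    have hall := ae_all_iff.mpr main
    filter_upwards [hall] with x hx
    haveI : IsFiniteMeasure (U α x) := isFiniteKernelMeasure hU hα x
    have hmono : Monotone fun n => (B ∩ A n).indicator w := fun i j hij y =>
      Set.indicator_le_indicator_of_subset
        (Set.inter_subset_inter_right _ (hAmono hij)) (fun _ => zero_le) y
    have hsup_fun : ∀ y, (⨆ n, (B ∩ A n).indicator w y) = B.indicator w y := by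
      intro y
      by_cases hyB : y ∈ B
      · obtain ⟨n, hn⟩ := exists_nat_ge |u y|
        refine le_antisymm (iSup_le fun k => ?_) ?_
        · exact Set.indicator_le_indicator_of_subset Set.inter_subset_left
            (fun _ => zero_le) y
        · have hyn : y ∈ B ∩ A n := ⟨hyB, hn⟩
          rw [Set.indicator_of_mem hyB]
          exact le_trans (le_of_eq (Set.indicator_of_mem hyn w).symm)
            (le_iSup (fun k => (B ∩ A k).indicator w y) n)
      · have hnot : ∀ n, y ∉ B ∩ A n := fun n hc => hyB hc.1
        simp [Set.indicator_of_notMem, hyB, hnot]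
    have hle1 : ∫⁻ y, B.indicator w y ∂(U α x)
        = ⨆ n, ∫⁻ y, (B ∩ A n).indicator w y ∂(U α x) := by
      rw [← lintegral_iSup (fun n => hwmeas.indicator (hB.inter (hAmeas n))) hmono]
      exact lintegral_congr fun y => (hsup_fun y).symm
    have hmeasB : (U α x) B = ⨆ n, (U α x) (B ∩ A n) := by
      have hBu : B = ⋃ n, B ∩ A n := by rw [← Set.inter_iUnion, hAunion, Set.inter_univ]
      nth_rewrite 1 [hBu]
      exact Monotone.measure_iUnion fun i j hij =>
        Set.inter_subset_inter_right _ (hAmono hij)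
    refine le_antisymm ?_ ?_
    · rw [hle1]
      exact iSup_le fun n => (hx n).2
    · rw [hmeasB, ENNReal.mul_iSup]
      refine iSup_le fun n => le_trans (hx n).1 ?_
      rw [hle1]
      exact le_iSup (fun n => ∫⁻ y, (B ∩ A n).indicator w y ∂(U α x)) n
  -- ### L1b : invariance of `u⁺` and `u⁻` on indicators
  have L1b : ∀ B : Set E, MeasurableSet B → ∀ᵐ x ∂m,
      (∫⁻ y, B.indicator av y ∂(U α x) = av x * (U α x) B) ∧
      (∫⁻ y, B.indicator bv y ∂(U α x) = bv x * (U α x) B) := by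
    intro B hB
    have hfB : ∀ y, u y * B.indicator (fun _ => (1:ℝ)) y = B.indicator u y := fun y => by
      by_cases hy : y ∈ B <;> simp [hy]
    filter_upwards [L1a B hB, hinv α hα (B.indicator fun _ => (1:ℝ))
      (measurable_const.indicator hB) ⟨1, fun y => by by_cases hy : y ∈ B <;> simp [hy]⟩]
      with x hL hI
    haveI : IsFiniteMeasure (U α x) := isFiniteKernelMeasure hU hα x
    simp only [Uop] at hI
    have hv_meas : Measurable (B.indicator u) := hum.indicator hB
    have hv_fin : ∫⁻ y, ENNReal.ofReal |B.indicator u y| ∂(U α x) = w x * (U α x) B := by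
      rw [← hL]
      refine lintegral_congr fun y => ?_
      by_cases hy : y ∈ B <;> simp [hy, hw]
    have hv_int : Integrable (B.indicator u) (U α x) := by
      refine ⟨hv_meas.aestronglyMeasurable, ?_⟩
      rw [hasFiniteIntegral_iff_norm]
      have e : ∫⁻ y, ENNReal.ofReal ‖B.indicator u y‖ ∂(U α x) = w x * (U α x) B := by
        rw [← hv_fin]
        exact lintegral_congr fun y => by rw [Real.norm_eq_abs]
      rw [e]
      exact ENNReal.mul_lt_top ENNReal.ofReal_lt_top (measure_lt_top _ _)
    have hIv : ∫ y, B.indicator u y ∂(U α x) = u x * ((U α x) B).toReal := by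
      have e1 : ∫ y, B.indicator u y ∂(U α x)
          = ∫ y, u y * B.indicator (fun _ => (1:ℝ)) y ∂(U α x) :=
        integral_congr_ae (ae_of_all _ fun y => (hfB y).symm)
      rw [e1, hI]
      congr 1
      simpa [Measure.real, Pi.one_def] using integral_indicator_one (μ := U α x) hB
    have hIabs : ∫ y, |B.indicator u y| ∂(U α x) = |u x| * ((U α x) B).toReal := by
      rw [integral_eq_lintegral_of_nonneg_ae (ae_of_all _ fun y => abs_nonneg _)
        hv_meas.abs.aestronglyMeasurable]
      rw [hv_fin, hw, ENNReal.toReal_mul, ENNReal.toReal_ofReal (abs_nonneg _)]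
    constructor
    · have e2 : ∫⁻ y, B.indicator av y ∂(U α x)
          = ∫⁻ y, ENNReal.ofReal (max (B.indicator u y) 0) ∂(U α x) := by
        refine lintegral_congr fun y => ?_
        rw [ofReal_max_zero']
        by_cases hy : y ∈ B <;> simp [hy, hav]
      rw [e2, ← ofReal_integral_eq_lintegral_ofReal hv_int.pos_part
        (ae_of_all _ fun y => le_max_right _ _)]
      have e3 : ∫ y, max (B.indicator u y) 0 ∂(U α x)
          = max (u x) 0 * ((U α x) B).toReal := by
        rw [integral_congr_ae (ae_of_all _ fun y => max_zero_eq' (B.indicator u y)),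
          integral_div, integral_add hv_int.abs hv_int, hIabs, hIv, max_zero_eq']
        ring
      rw [e3, ENNReal.ofReal_mul (le_max_right _ _), ofReal_max_zero',
        ENNReal.ofReal_toReal (measure_ne_top _ _), hav]
    · have e2 : ∫⁻ y, B.indicator bv y ∂(U α x)
          = ∫⁻ y, ENNReal.ofReal (max (-(B.indicator u y)) 0) ∂(U α x) := by
        refine lintegral_congr fun y => ?_
        rw [ofReal_max_zero']
        by_cases hy : y ∈ B <;> simp [hy, hbv]
      rw [e2, ← ofReal_integral_eq_lintegral_ofReal hv_int.neg_part
        (ae_of_all _ fun y => le_max_right _ _)]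
      have e3 : ∫ y, max (-(B.indicator u y)) 0 ∂(U α x)
          = max (-(u x)) 0 * ((U α x) B).toReal := by
        rw [integral_congr_ae (ae_of_all _ fun y => max_neg_zero_eq' (B.indicator u y)),
          integral_div, integral_sub hv_int.abs hv_int, hIabs, hIv, max_neg_zero_eq']
        ring
      rw [e3, ENNReal.ofReal_mul (le_max_right _ _), ofReal_max_zero',
        ENNReal.ofReal_toReal (measure_ne_top _ _), hbv]
  -- ### spanning sets
  set S : ℕ → Set E := fun k => spanningSets m k ∩ A k with hS
  have hSmeas : ∀ k, MeasurableSet (S k) := fun k =>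
    (measurableSet_spanningSets m k).inter (hAmeas k)
  have hSunion : ⋃ k, S k = Set.univ := by
    apply Set.eq_univ_of_forall
    intro y
    have hy1 : y ∈ ⋃ i, spanningSets m i := by
      rw [iUnion_spanningSets m]; exact Set.mem_univ y
    obtain ⟨i, hi⟩ := Set.mem_iUnion.mp hy1
    obtain ⟨j, hj⟩ := exists_nat_ge |u y|
    refine Set.mem_iUnion.mpr ⟨max i j, ⟨monotone_spanningSets m (le_max_left i j) hi, ?_⟩⟩
    exact le_trans hj (Nat.cast_le.mpr (le_max_right i j))
  have hSfin : ∀ k, m (S k) < ∞ := fun k =>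
    lt_of_le_of_lt (measure_mono Set.inter_subset_left) (measure_spanningSets_lt_top m k)
  -- ### finiteness of the dual potential of w on spanning sets
  have hSk_fin : ∀ k, ∫⁻ x in S k, NW x ∂m ≠ ∞ := by
    intro k
    have e1 : ∫⁻ x in S k, NW x ∂m
        = ∫⁻ x, (S k).indicator (1 : E → ℝ≥0∞) x * NW x ∂m := by
      rw [← lintegral_indicator (hSmeas k)]
      refine lintegral_congr fun x => ?_
      by_cases hx : x ∈ S k <;> simp [hx]
    have e2 : ∫⁻ y, w y * ∫⁻ z, (S k).indicator (1 : E → ℝ≥0∞) z ∂(U α y) ∂m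
        = ∫⁻ y, w y * (U α y) (S k) ∂m := by
      refine lintegral_congr fun y => ?_
      rw [lintegral_indicator_one (hSmeas k)]
    have e3 : ∫⁻ y, w y * (U α y) (S k) ∂m
        = ∫⁻ y, (1 : ℝ≥0∞) * ∫⁻ z, (S k).indicator w z ∂(U α y) ∂m := by
      refine lintegral_congr_ae ?_
      filter_upwards [L1a (S k) (hSmeas k)] with y hy
      rw [one_mul, hy]
    have calc1 : ∫⁻ x in S k, NW x ∂m
        = ∫⁻ y, (S k).indicator w y * ∫⁻ _, (1:ℝ≥0∞) ∂(Uhat α y) ∂m := by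
      rw [e1, hdual' α hα _ w (measurable_one.indicator (hSmeas k)) hwmeas, e2, e3]
      exact hdual α hα _ _ measurable_const (hwmeas.indicator (hSmeas k))
    rw [calc1]
    have e4 : ∫⁻ y, (S k).indicator w y * ∫⁻ _, (1:ℝ≥0∞) ∂(Uhat α y) ∂m
        ≤ ∫⁻ y, (spanningSets m k).indicator
            (fun _ => ENNReal.ofReal (k:ℝ) * ENNReal.ofReal α⁻¹) y ∂m := by
      refine lintegral_mono fun y => ?_
      rw [lintegral_one]
      by_cases hy : y ∈ S k
      · rw [Set.indicator_of_mem hy, Set.indicator_of_mem hy.1]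
        refine mul_le_mul' ?_ (hUhat α hα y)
        rw [hw]
        exact ENNReal.ofReal_le_ofReal hy.2
      · rw [Set.indicator_of_notMem hy, zero_mul]
        exact zero_le
    refine (lt_of_le_of_lt e4 ?_).ne
    rw [lintegral_indicator (measurableSet_spanningSets m k), setLIntegral_const]
    exact ENNReal.mul_lt_top
      (ENNReal.mul_lt_top ENNReal.ofReal_lt_top ENNReal.ofReal_lt_top)
      (measure_spanningSets_lt_top m k)
  have hNW_fin : ∀ᵐ x ∂m, NW x < ∞ := by
    rw [ae_iff]
    refine measure_null_of_null_inter hSunion fun k => ?_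
    rw [← Measure.restrict_apply' (hSmeas k)]
    exact ae_iff.mp (ae_lt_top (μ := m.restrict (S k)) hNWm (hSk_fin k))
  -- ### pointwise representations
  have hgint : ∀ x : E, Integrable g (Uhat α x) := by
    intro x
    haveI : IsFiniteMeasure (Uhat α x) := isFiniteKernelMeasure hUhat hα x
    exact (integrable_const C).mono' hg.aestronglyMeasurable
      (ae_of_all _ fun y => by rw [Real.norm_eq_abs]; exact hC y)
  set P1 : E → ℝ≥0∞ := fun x => av x * Gp x + bv x * Gm x with hP1
  set P2 : E → ℝ≥0∞ := fun x => av x * Gm x + bv x * Gp x with hP2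
  have hP1m : Measurable P1 := (havm.mul hGpm).add (hbvm.mul hGmm)
  have hP2m : Measurable P2 := (havm.mul hGmm).add (hbvm.mul hGpm)
  have hP1lt : ∀ x, P1 x < ∞ := fun x => ENNReal.add_lt_top.mpr
    ⟨ENNReal.mul_lt_top ENNReal.ofReal_lt_top (hGp_ne x).lt_top,
     ENNReal.mul_lt_top ENNReal.ofReal_lt_top (hGm_ne x).lt_top⟩
  have hP2lt : ∀ x, P2 x < ∞ := fun x => ENNReal.add_lt_top.mpr
    ⟨ENNReal.mul_lt_top ENNReal.ofReal_lt_top (hGm_ne x).lt_top,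
     ENNReal.mul_lt_top ENNReal.ofReal_lt_top (hGp_ne x).lt_top⟩
  have hF1 : ∀ x : E, u x * Uop Uhat α g x = (P1 x).toReal - (P2 x).toReal := by
    intro x
    haveI : IsFiniteMeasure (Uhat α x) := isFiniteKernelMeasure hUhat hα x
    have hrepr : Uop Uhat α g x = (Gp x).toReal - (Gm x).toReal := by
      simpa [Uop, hGp, hGm, hγp, hγm] using
        integral_eq_lintegral_pos_part_sub_lintegral_neg_part (hgint x)
    rw [hrepr, hP1, hP2]
    rw [ENNReal.toReal_add (ENNReal.mul_ne_top ENNReal.ofReal_ne_top (hGp_ne x))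
        (ENNReal.mul_ne_top ENNReal.ofReal_ne_top (hGm_ne x)),
      ENNReal.toReal_add (ENNReal.mul_ne_top ENNReal.ofReal_ne_top (hGm_ne x))
        (ENNReal.mul_ne_top ENNReal.ofReal_ne_top (hGp_ne x)),
      ENNReal.toReal_mul, ENNReal.toReal_mul, ENNReal.toReal_mul, ENNReal.toReal_mul]
    simp only [hav, hbv, ENNReal.toReal_ofReal']
    rcases le_total 0 (u x) with h0 | h0
    · rw [max_eq_left h0, max_eq_right (neg_nonpos.mpr h0)]
      ring
    · rw [max_eq_right h0, max_eq_left (neg_nonneg.mpr h0)]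
      ring
  have haeLp : ∀ᵐ x ∂m, Lp x < ∞ := by
    filter_upwards [hNW_fin] with x hx
    exact lt_of_le_of_lt (hLp_le x) (ENNReal.mul_lt_top ENNReal.ofReal_lt_top hx)
  have haeLm : ∀ᵐ x ∂m, Lm x < ∞ := by
    filter_upwards [hNW_fin] with x hx
    exact lt_of_le_of_lt (hLm_le x) (ENNReal.mul_lt_top ENNReal.ofReal_lt_top hx)
  have hF2 : ∀ᵐ x ∂m, Uop Uhat α (fun y => u y * g y) x = (Lp x).toReal - (Lm x).toReal := by
    filter_upwards [hNW_fin] with x hx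
    haveI : IsFiniteMeasure (Uhat α x) := isFiniteKernelMeasure hUhat hα x
    have hint : Integrable (fun y => u y * g y) (Uhat α x) := by
      refine ⟨(hum.mul hg).aestronglyMeasurable, ?_⟩
      rw [hasFiniteIntegral_iff_norm]
      calc ∫⁻ y, ENNReal.ofReal ‖u y * g y‖ ∂(Uhat α x)
          ≤ ∫⁻ y, ENNReal.ofReal C * w y ∂(Uhat α x) := by
            refine lintegral_mono fun y => ?_
            rw [Real.norm_eq_abs, abs_mul, hw, ← ENNReal.ofReal_mul hC0]
            refine ENNReal.ofReal_le_ofReal ?_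
            nlinarith [hC y, abs_nonneg (u y), abs_nonneg (g y)]
        _ = ENNReal.ofReal C * NW x := lintegral_const_mul _ hwmeas
        _ < ∞ := ENNReal.mul_lt_top ENNReal.ofReal_lt_top hx
    simpa [Uop, hLp, hLm, hφp, hφm] using
      integral_eq_lintegral_pos_part_sub_lintegral_neg_part hint
  -- ### finiteness of set lintegrals
  have hLB_fin : ∀ (k : ℕ) (B : Set E), B ⊆ S k →
      (∫⁻ x in B, Lp x ∂m ≠ ∞) ∧ (∫⁻ x in B, Lm x ∂m ≠ ∞) := by
    intro k B hBsub
    have hbase : ∫⁻ x in B, ENNReal.ofReal C * NW x ∂m ≠ ∞ := by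
      have h1 : ∫⁻ x in B, ENNReal.ofReal C * NW x ∂m
          = ENNReal.ofReal C * ∫⁻ x in B, NW x ∂m := lintegral_const_mul _ hNWm
      rw [h1]
      exact (ENNReal.mul_lt_top ENNReal.ofReal_lt_top
        (lt_of_le_of_lt (lintegral_mono_set hBsub)
          (lt_top_iff_ne_top.mpr (hSk_fin k)))).ne
    constructor
    · exact ((lintegral_mono fun x => hLp_le x).trans_lt (lt_top_iff_ne_top.mpr hbase)).ne
    · exact ((lintegral_mono fun x => hLm_le x).trans_lt (lt_top_iff_ne_top.mpr hbase)).ne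
  have hPfin : ∀ (k : ℕ) (B : Set E), MeasurableSet B → B ⊆ S k →
      (∫⁻ x in B, P1 x ∂m ≠ ∞) ∧ (∫⁻ x in B, P2 x ∂m ≠ ∞) := by
    intro k B hB hBsub
    have hb : ∀ x ∈ B, av x ≤ ENNReal.ofReal (k:ℝ) ∧ bv x ≤ ENNReal.ofReal (k:ℝ) := by
      intro x hx
      have hxA : |u x| ≤ (k:ℝ) := (hBsub hx).2
      constructor
      · rw [hav]
        exact ENNReal.ofReal_le_ofReal ((le_abs_self _).trans hxA)
      · rw [hbv]
        exact ENNReal.ofReal_le_ofReal ((neg_le_abs _).trans hxA)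
    have hbd : ∀ (Q : E → ℝ≥0∞), (∀ x ∈ B, Q x ≤
        ENNReal.ofReal (k:ℝ) * (ENNReal.ofReal C * ENNReal.ofReal α⁻¹) * 2) →
        ∫⁻ x in B, Q x ∂m ≠ ∞ := by
      intro Q hQ
      have h1 : ∫⁻ x in B, Q x ∂m
          ≤ ∫⁻ _ in B, ENNReal.ofReal (k:ℝ) * (ENNReal.ofReal C * ENNReal.ofReal α⁻¹) * 2 ∂m :=
        lintegral_mono_ae ((ae_restrict_iff' hB).mpr (ae_of_all _ hQ))
      refine (lt_of_le_of_lt h1 ?_).ne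
      rw [setLIntegral_const]
      refine ENNReal.mul_lt_top ?_ (lt_of_le_of_lt (measure_mono hBsub) (hSfin k))
      refine ENNReal.mul_lt_top (ENNReal.mul_lt_top ENNReal.ofReal_lt_top ?_) (by norm_num)
      exact ENNReal.mul_lt_top ENNReal.ofReal_lt_top ENNReal.ofReal_lt_top
    constructor
    · refine hbd P1 fun x hx => ?_
      rw [hP1]
      calc av x * Gp x + bv x * Gm x
          ≤ ENNReal.ofReal (k:ℝ) * (ENNReal.ofReal C * ENNReal.ofReal α⁻¹)
            + ENNReal.ofReal (k:ℝ) * (ENNReal.ofReal C * ENNReal.ofReal α⁻¹) :=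
            add_le_add (mul_le_mul' (hb x hx).1 (hGp_le x)) (mul_le_mul' (hb x hx).2 (hGm_le x))
        _ = ENNReal.ofReal (k:ℝ) * (ENNReal.ofReal C * ENNReal.ofReal α⁻¹) * 2 := by ring
    · refine hbd P2 fun x hx => ?_
      rw [hP2]
      calc av x * Gm x + bv x * Gp x
          ≤ ENNReal.ofReal (k:ℝ) * (ENNReal.ofReal C * ENNReal.ofReal α⁻¹)
            + ENNReal.ofReal (k:ℝ) * (ENNReal.ofReal C * ENNReal.ofReal α⁻¹) :=
            add_le_add (mul_le_mul' (hb x hx).1 (hGm_le x)) (mul_le_mul' (hb x hx).2 (hGp_le x))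
        _ = ENNReal.ofReal (k:ℝ) * (ENNReal.ofReal C * ENNReal.ofReal α⁻¹) * 2 := by ring
  -- ### set-integral identity SC1
  have SC1 : ∀ (k : ℕ) (B : Set E), MeasurableSet B → B ⊆ S k →
      ∫ x in B, Uop Uhat α (fun y => u y * g y) x ∂m
        = (∫⁻ y, φp y * (U α y) B ∂m).toReal - (∫⁻ y, φm y * (U α y) B ∂m).toReal := by
    intro k B hB hBsub
    obtain ⟨hfinp, hfinm⟩ := hLB_fin k B hBsub
    have e1 : ∫ x in B, Uop Uhat α (fun y => u y * g y) x ∂m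
        = ∫ x in B, ((Lp x).toReal - (Lm x).toReal) ∂m :=
      setIntegral_congr_ae hB (hF2.mono fun x hx _ => hx)
    have hip : Integrable (fun x => (Lp x).toReal) (m.restrict B) :=
      integrable_toReal_of_lintegral_ne_top hLpm.aemeasurable hfinp
    have him : Integrable (fun x => (Lm x).toReal) (m.restrict B) :=
      integrable_toReal_of_lintegral_ne_top hLmm.aemeasurable hfinm
    have e2 : ∫ x in B, ((Lp x).toReal - (Lm x).toReal) ∂m
        = (∫⁻ x in B, Lp x ∂m).toReal - (∫⁻ x in B, Lm x ∂m).toReal := by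
      rw [integral_sub hip him, integral_toReal hLpm.aemeasurable (ae_restrict_of_ae haeLp),
        integral_toReal hLmm.aemeasurable (ae_restrict_of_ae haeLm)]
    have e3 : ∫⁻ x in B, Lp x ∂m = ∫⁻ y, φp y * (U α y) B ∂m := by
      have i1 : ∫⁻ x in B, Lp x ∂m = ∫⁻ x, B.indicator (1 : E → ℝ≥0∞) x * Lp x ∂m := by
        rw [← lintegral_indicator hB]
        refine lintegral_congr fun x => ?_
        by_cases hx : x ∈ B <;> simp [hx]
      rw [i1, hdual' α hα _ φp (measurable_one.indicator hB) hφpm]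
      refine lintegral_congr fun y => ?_
      rw [lintegral_indicator_one hB]
    have e4 : ∫⁻ x in B, Lm x ∂m = ∫⁻ y, φm y * (U α y) B ∂m := by
      have i1 : ∫⁻ x in B, Lm x ∂m = ∫⁻ x, B.indicator (1 : E → ℝ≥0∞) x * Lm x ∂m := by
        rw [← lintegral_indicator hB]
        refine lintegral_congr fun x => ?_
        by_cases hx : x ∈ B <;> simp [hx]
      rw [i1, hdual' α hα _ φm (measurable_one.indicator hB) hφmm]
      refine lintegral_congr fun y => ?_
      rw [lintegral_indicator_one hB]
    rw [e1, e2, e3, e4]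
  -- ### set-integral identity SC2
  have SC2 : ∀ (k : ℕ) (B : Set E), MeasurableSet B → B ⊆ S k →
      ∫ x in B, u x * Uop Uhat α g x ∂m
        = (∫⁻ y, (γp y * av y + γm y * bv y) * (U α y) B ∂m).toReal
          - (∫⁻ y, (γm y * av y + γp y * bv y) * (U α y) B ∂m).toReal := by
    intro k B hB hBsub
    obtain ⟨hfinP1, hfinP2⟩ := hPfin k B hB hBsub
    have e1 : ∫ x in B, u x * Uop Uhat α g x ∂m
        = ∫ x in B, ((P1 x).toReal - (P2 x).toReal) ∂m :=
      setIntegral_congr_ae hB (ae_of_all _ fun x _ => hF1 x)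
    have hip : Integrable (fun x => (P1 x).toReal) (m.restrict B) :=
      integrable_toReal_of_lintegral_ne_top hP1m.aemeasurable hfinP1
    have him : Integrable (fun x => (P2 x).toReal) (m.restrict B) :=
      integrable_toReal_of_lintegral_ne_top hP2m.aemeasurable hfinP2
    have e2 : ∫ x in B, ((P1 x).toReal - (P2 x).toReal) ∂m
        = (∫⁻ x in B, P1 x ∂m).toReal - (∫⁻ x in B, P2 x ∂m).toReal := by
      rw [integral_sub hip him, integral_toReal hP1m.aemeasurable (ae_of_all _ hP1lt),
        integral_toReal hP2m.aemeasurable (ae_of_all _ hP2lt)]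
    have dual_piece : ∀ (cv : E → ℝ≥0∞), Measurable cv →
        (∀ᵐ y ∂m, ∫⁻ z, B.indicator cv z ∂(U α y) = cv y * (U α y) B) →
        ∀ (γ : E → ℝ≥0∞), Measurable γ →
        ∫⁻ x in B, cv x * (fun x' => ∫⁻ y, γ y ∂(Uhat α x')) x ∂m
          = ∫⁻ y, (γ y * cv y) * (U α y) B ∂m := by
      intro cv hcv hcvB γ hγ
      have j1 : ∫⁻ x in B, cv x * (∫⁻ y, γ y ∂(Uhat α x)) ∂m
          = ∫⁻ x, (B.indicator cv) x * (∫⁻ y, γ y ∂(Uhat α x)) ∂m := by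
        rw [← lintegral_indicator hB]
        refine lintegral_congr fun x => ?_
        by_cases hx : x ∈ B <;> simp [hx]
      rw [j1, hdual' α hα (B.indicator cv) γ (hcv.indicator hB) hγ]
      refine lintegral_congr_ae ?_
      filter_upwards [hcvB] with y hy
      rw [hy, ← mul_assoc]
    have hav_inv : ∀ᵐ y ∂m, ∫⁻ z, B.indicator av z ∂(U α y) = av y * (U α y) B := by
      filter_upwards [L1b B hB] with y hy; exact hy.1
    have hbv_inv : ∀ᵐ y ∂m, ∫⁻ z, B.indicator bv z ∂(U α y) = bv y * (U α y) B := by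
      filter_upwards [L1b B hB] with y hy; exact hy.2
    have hsplit1 : ∫⁻ x in B, P1 x ∂m
        = ∫⁻ y, (γp y * av y + γm y * bv y) * (U α y) B ∂m := by
      have i0 : ∫⁻ x in B, P1 x ∂m
          = ∫⁻ x in B, av x * Gp x ∂m + ∫⁻ x in B, bv x * Gm x ∂m := by
        rw [hP1]
        exact lintegral_add_left (havm.mul hGpm) _
      rw [i0, dual_piece av havm hav_inv γp hγpm, dual_piece bv hbvm hbv_inv γm hγmm,
        ← lintegral_add_left (f := fun y => γp y * av y * (U α y) B) (((hγpm.mul havm).mul (Kernel.measurable_coe (U α) hB))) _]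
      refine lintegral_congr fun y => ?_
      ring
    have hsplit2 : ∫⁻ x in B, P2 x ∂m
        = ∫⁻ y, (γm y * av y + γp y * bv y) * (U α y) B ∂m := by
      have i0 : ∫⁻ x in B, P2 x ∂m
          = ∫⁻ x in B, av x * Gm x ∂m + ∫⁻ x in B, bv x * Gp x ∂m := by
        rw [hP2]
        exact lintegral_add_left (havm.mul hGmm) _
      rw [i0, dual_piece av havm hav_inv γm hγmm, dual_piece bv hbvm hbv_inv γp hγpm,
        ← lintegral_add_left (f := fun y => γm y * av y * (U α y) B) (((hγmm.mul havm).mul (Kernel.measurable_coe (U α) hB))) _]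
      refine lintegral_congr fun y => ?_
      ring
    rw [e1, e2, hsplit1, hsplit2]
  -- ### combining SC1, SC2 via the pointwise sign-splitting
  have SC3p : ∀ y, φp y = γp y * av y + γm y * bv y := fun y => by
    rw [hφp, hγp, hγm, hav, hbv]
    exact ofReal_mul_split (u y) (g y)
  have SC3m : ∀ y, φm y = γm y * av y + γp y * bv y := fun y => by
    simp only [hφm, hγp, hγm, hav, hbv]
    have h0 : -(u y * g y) = u y * (-g y) := by ring
    rw [h0, ofReal_mul_split (u y) (-g y), neg_neg]
  have SC : ∀ (k : ℕ) (B : Set E), MeasurableSet B → B ⊆ S k →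
      ∫ x in B, Uop Uhat α (fun y => u y * g y) x ∂m
        = ∫ x in B, u x * Uop Uhat α g x ∂m := by
    intro k B hB hBsub
    rw [SC1 k B hB hBsub, SC2 k B hB hBsub]
    have c1 : ∫⁻ y, φp y * (U α y) B ∂m
        = ∫⁻ y, (γp y * av y + γm y * bv y) * (U α y) B ∂m :=
      lintegral_congr fun y => by rw [SC3p y]
    have c2 : ∫⁻ y, φm y * (U α y) B ∂m
        = ∫⁻ y, (γm y * av y + γp y * bv y) * (U α y) B ∂m :=
      lintegral_congr fun y => by rw [SC3m y]
    rw [c1, c2]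
  -- ### conclusion on each S k
  have hk : ∀ k : ℕ, Uop Uhat α (fun y => u y * g y) =ᵐ[m.restrict (S k)]
      fun x => u x * Uop Uhat α g x := by
    intro k
    have hint1 : Integrable (Uop Uhat α (fun y => u y * g y)) (m.restrict (S k)) := by
      obtain ⟨hfp, hfm⟩ := hLB_fin k (S k) subset_rfl
      have base : Integrable (fun x => (Lp x).toReal - (Lm x).toReal) (m.restrict (S k)) :=
        (integrable_toReal_of_lintegral_ne_top hLpm.aemeasurable hfp).sub
          (integrable_toReal_of_lintegral_ne_top hLmm.aemeasurable hfm)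
      exact base.congr (ae_restrict_of_ae (hF2.mono fun x hx => hx.symm))
    have hint2 : Integrable (fun x => u x * Uop Uhat α g x) (m.restrict (S k)) := by
      obtain ⟨hfp, hfm⟩ := hPfin k (S k) (hSmeas k) subset_rfl
      have base : Integrable (fun x => (P1 x).toReal - (P2 x).toReal) (m.restrict (S k)) :=
        (integrable_toReal_of_lintegral_ne_top hP1m.aemeasurable hfp).sub
          (integrable_toReal_of_lintegral_ne_top hP2m.aemeasurable hfm)
      exact base.congr (ae_of_all _ fun x => (hF1 x).symm)
    refine Integrable.ae_eq_of_forall_setIntegral_eq _ _ hint1 hint2 fun s hs hμs => ?_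
    rw [Measure.restrict_restrict hs]
    exact SC k (s ∩ S k) (hs.inter (hSmeas k)) Set.inter_subset_right
  -- ### globalize
  have hnull : ∀ k, m ({x | ¬ Uop Uhat α (fun y => u y * g y) x
      = u x * Uop Uhat α g x} ∩ S k) = 0 := by
    intro k
    rw [← Measure.restrict_apply' (hSmeas k)]
    exact ae_iff.mp (hk k)
  exact ae_iff.mpr (measure_null_of_null_inter hSunion hnull)

/-- For a sub-Markovian resolvent `U` with sub-invariant σ-finite measure `m`
and weak dual resolvent `Û`, a function `u ∈ L^p(E,m)` is `U`-invariant iff `Û`-invariant. -/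
theorem uInvariant_iff_dual_uInvariant
    {E : Type*} [MeasurableSpace E] (m : Measure E) [SigmaFinite m]
    (U Uhat : ℝ → Kernel E E)
    (hU : SubMarkovResolvent U) (hUhat : SubMarkovResolvent Uhat)
    (hm : SubInvariantMeasure m U) (hmhat : SubInvariantMeasure m Uhat)
    (hdual : WeakDuality m U Uhat)
    (p : ℝ≥0∞) (u : E → ℝ) (hu : MemLp u p m) :
    UInvariant m U u ↔ UInvariant m Uhat u := by
  have hdual' : WeakDuality m Uhat U := fun β hβ f g hf hg => (hdual β hβ g f hg hf).symm
  obtain ⟨u', hu'sm, huu'⟩ : ∃ u', StronglyMeasurable u' ∧ u =ᵐ[m] u' :=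
    ⟨hu.1.mk u, hu.1.stronglyMeasurable_mk, hu.1.ae_eq_mk⟩
  have hu'm : Measurable u' := hu'sm.measurable
  constructor
  · intro h
    refine uInvariant_congr m Uhat hmhat huu'.symm ?_
    exact key_dir m U Uhat hU hUhat hdual hu'm (uInvariant_congr m U hm huu' h)
  · intro h
    refine uInvariant_congr m U hm huu'.symm ?_
    exact key_dir m Uhat U hUhat hU hdual' hu'm (uInvariant_congr m Uhat hmhat huu' h)
end

section
/- The set of all U-invariant functions in L^p(E,m) is a vector lattice with respect to the pointwise (m-a.e.) order: it is a vector subspace closed under taking maxima and minima. -/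
open MeasureTheory ProbabilityTheory Filter
open scoped NNReal ENNReal

section Aux

variable {E : Type*} [MeasurableSpace E] {m : Measure E} {U Uhat : ℝ → Kernel E E}

lemma isFiniteKernel_of_subMarkov (hU : SubMarkovResolvent U) {α : ℝ} (hα : 0 < α) :
    IsFiniteKernel (U α) :=
  ⟨⟨ENNReal.ofReal α⁻¹, ENNReal.ofReal_lt_top, fun x => hU α hα x⟩⟩

lemma isFiniteMeasure_of_subMarkov (hU : SubMarkovResolvent U) {α : ℝ} (hα : 0 < α) (x : E) :
    IsFiniteMeasure (U α x) :=
  ⟨(hU α hα x).trans_lt ENNReal.ofReal_lt_top⟩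

lemma integrable_of_bdd {μ : Measure E} [IsFiniteMeasure μ] {f : E → ℝ}
    (hf : Measurable f) {C : ℝ} (hfb : ∀ y, |f y| ≤ C) : Integrable f μ := by
  refine ⟨hf.aestronglyMeasurable, ?_⟩
  have : ∫⁻ y, ‖f y‖₊ ∂μ ≤ ENNReal.ofReal C * μ Set.univ := by
    calc ∫⁻ y, ‖f y‖₊ ∂μ ≤ ∫⁻ _, ENNReal.ofReal C ∂μ := by
          refine lintegral_mono fun y => ?_
          rw [← enorm_eq_nnnorm, Real.enorm_eq_ofReal_abs]
          exact ENNReal.ofReal_le_ofReal (hfb y)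
      _ = ENNReal.ofReal C * μ Set.univ := by rw [lintegral_const]
  exact lt_of_le_of_lt this (ENNReal.mul_lt_top ENNReal.ofReal_lt_top (measure_lt_top _ _))

/-- If `m N = 0` then `(U α x) N = 0` for `m`-a.e. `x`. -/
lemma kernel_null (hm : SubInvariantMeasure m U) (hU : SubMarkovResolvent U)
    {α : ℝ} (hα : 0 < α) {N : Set E} (hN : MeasurableSet N) (hN0 : m N = 0) :
    ∀ᵐ x ∂m, (U α x) N = 0 := by
  haveI := isFiniteKernel_of_subMarkov hU hα
  have h := hm α hα (N.indicator 1) (measurable_one.indicator hN)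
  rw [lintegral_indicator_one hN, hN0, le_zero_iff] at h
  have hmeas : Measurable fun x => ENNReal.ofReal α * ∫⁻ y, N.indicator 1 y ∂(U α x) :=
    (Measurable.lintegral_kernel (measurable_one.indicator hN)).const_mul _
  have := (lintegral_eq_zero_iff hmeas).1 h
  filter_upwards [this] with x hx
  have hα0 : ENNReal.ofReal α ≠ 0 := by
    simp [ENNReal.ofReal_eq_zero, not_le, hα]
  rcases mul_eq_zero.1 hx with h' | h'
  · exact absurd h' hα0
  · rwa [lintegral_indicator_one hN] at h'

/-- `UInvariant` is stable under a.e. modification. -/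
lemma uinv_congr (hm : SubInvariantMeasure m U) (hU : SubMarkovResolvent U)
    {u u' : E → ℝ} (hhe : u =ᵐ[m] u') (huI : UInvariant m U u) : UInvariant m U u' := by
  intro α hα f hf hfb
  have hN : MeasurableSet (toMeasurable m {x | u x ≠ u' x}) := measurableSet_toMeasurable _ _
  have hN0 : m (toMeasurable m {x | u x ≠ u' x}) = 0 := by
    rw [measure_toMeasurable]; exact hhe
  filter_upwards [huI α hα f hf hfb, kernel_null hm hU hα hN hN0, hhe] with x h1 h2 h3
  have hnull : (U α x) {y | ¬ u y = u' y} = 0 :=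
    measure_mono_null (subset_toMeasurable m _) h2
  have heq : u =ᵐ[U α x] u' := ae_iff.2 hnull
  have e1 : Uop U α (fun y => u' y * f y) x = Uop U α (fun y => u y * f y) x := by
    refine integral_congr_ae ?_
    filter_upwards [heq] with y hy
    rw [hy]
  rw [e1, h1, ← h3]

/-- Key integrability: if `u` is invariant then `∫⁻ |u| d(U α x) ≤ |u x|/α` a.e. -/
lemma lint_abs_le (hU : SubMarkovResolvent U) {u : E → ℝ} (hu : Measurable u)
    (huI : UInvariant m U u) {α : ℝ} (hα : 0 < α) :
    ∀ᵐ x ∂m, ∫⁻ y, ENNReal.ofReal |u y| ∂(U α x) ≤ ENNReal.ofReal (|u x| * α⁻¹) := by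
  haveI := isFiniteKernel_of_subMarkov hU hα
  set f : ℕ → E → ℝ := fun n y => if |u y| ≤ (n:ℝ) then (if 0 ≤ u y then (1:ℝ) else -1) else 0 with hf
  have hfm : ∀ n, Measurable (f n) := by
    intro n
    refine Measurable.ite (measurableSet_le hu.abs measurable_const) ?_ measurable_const
    exact Measurable.ite (measurableSet_le measurable_const hu) measurable_const measurable_const
  have hfb : ∀ n y, |f n y| ≤ 1 := by
    intro n y; simp only [hf]; split_ifs <;> simp
  have hmul : ∀ n y, u y * f n y = if |u y| ≤ (n:ℝ) then |u y| else 0 := by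
    intro n y; simp only [hf]
    split_ifs with h1 h2
    · rw [mul_one, abs_of_nonneg h2]
    · rw [mul_neg_one, abs_of_neg (lt_of_not_ge h2)]
    · rw [mul_zero]
  have hae : ∀ᵐ x ∂m, ∀ n : ℕ,
      Uop U α (fun y => u y * f n y) x = u x * Uop U α (f n) x := by
    rw [ae_all_iff]
    intro n
    exact huI α hα (f n) (hfm n) ⟨1, hfb n⟩
  filter_upwards [hae] with x hx
  haveI := isFiniteMeasure_of_subMarkov hU hα x
  set t : ℕ → E → ℝ≥0∞ := fun n y => if |u y| ≤ (n:ℝ) then ENNReal.ofReal |u y| else 0 with ht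
  have htm : ∀ n, Measurable (t n) := by
    intro n
    exact Measurable.ite (measurableSet_le hu.abs measurable_const)
      (ENNReal.measurable_ofReal.comp hu.abs) measurable_const
  have hlin : ∀ n, ∫⁻ y, t n y ∂(U α x) ≤ ENNReal.ofReal (|u x| * α⁻¹) := by
    intro n
    have hfin : ∫⁻ y, t n y ∂(U α x) ≠ ∞ := by
      have : ∫⁻ y, t n y ∂(U α x) ≤ ENNReal.ofReal n * (U α x) Set.univ := by
        calc ∫⁻ y, t n y ∂(U α x) ≤ ∫⁻ _, ENNReal.ofReal n ∂(U α x) := by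
              refine lintegral_mono fun y => ?_
              simp only [ht]
              split_ifs with h
              · exact ENNReal.ofReal_le_ofReal h
              · exact zero_le
          _ = ENNReal.ofReal n * (U α x) Set.univ := lintegral_const _
      exact (this.trans_lt (ENNReal.mul_lt_top ENNReal.ofReal_lt_top
        (measure_lt_top _ _))).ne
    have hint : ∫ y, u y * f n y ∂(U α x) = (∫⁻ y, t n y ∂(U α x)).toReal := by
      rw [integral_eq_lintegral_of_nonneg_ae]
      · congr 1
        refine lintegral_congr fun y => ?_
        rw [hmul n y]
        simp only [ht]
        split_ifs
        · rfl
        · simp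
      · filter_upwards with y
        rw [hmul n y]
        split_ifs
        · exact abs_nonneg _
        · exact le_refl 0
      · exact ((hu.mul (hfm n)).aestronglyMeasurable)
    have hb : u x * Uop U α (f n) x ≤ |u x| * α⁻¹ := by
      have h1 : u x * Uop U α (f n) x ≤ |u x * Uop U α (f n) x| := le_abs_self _
      rw [abs_mul] at h1
      refine h1.trans (mul_le_mul_of_nonneg_left ?_ (abs_nonneg _))
      have h2 : |Uop U α (f n) x| ≤ ∫ y, |f n y| ∂(U α x) := by
        simpa [Real.norm_eq_abs, Uop] using norm_integral_le_integral_norm (μ := U α x) (f n)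
      refine h2.trans ?_
      have h3 : ∫ y, |f n y| ∂(U α x) ≤ ∫ _, (1:ℝ) ∂(U α x) := by
        refine integral_mono ?_ (integrable_const 1) (hfb n)
        exact (integrable_of_bdd (hfm n) (hfb n)).abs
      refine h3.trans ?_
      rw [integral_const, smul_eq_mul, mul_one]
      exact ENNReal.toReal_le_of_le_ofReal (inv_nonneg.2 hα.le) (hU α hα x)
    calc ∫⁻ y, t n y ∂(U α x) = ENNReal.ofReal (u x * Uop U α (f n) x) := by
          rw [← hx n]
          have := hint
          rw [show Uop U α (fun y => u y * f n y) x = ∫ y, u y * f n y ∂(U α x) from rfl, this,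
            ENNReal.ofReal_toReal hfin]
      _ ≤ ENNReal.ofReal (|u x| * α⁻¹) := ENNReal.ofReal_le_ofReal hb
  have hsup : ∫⁻ y, ENNReal.ofReal |u y| ∂(U α x) = ⨆ n, ∫⁻ y, t n y ∂(U α x) := by
    rw [← lintegral_iSup htm]
    · refine lintegral_congr fun y => ?_
      refine le_antisymm ?_ (iSup_le fun n => ?_)
      · refine le_iSup_of_le ⌈|u y|⌉₊ ?_
        simp only [ht]
        rw [if_pos (Nat.le_ceil _)]
      · simp only [ht]
        split_ifs
        · exact le_refl _
        · exact zero_le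
    · intro i j hij y
      simp only [ht]
      split_ifs with h1 h2
      · exact le_refl _
      · exact absurd (h1.trans (Nat.cast_le.2 hij)) h2
      · exact zero_le
      · exact le_refl _
  rw [hsup]
  exact iSup_le hlin

/-- Integrability of `u * f` against a finite measure when `∫⁻ |u| < ∞`. -/
lemma integrable_mul_of_bound {μ : Measure E} [IsFiniteMeasure μ] {u f : E → ℝ}
    (hu : Measurable u) (hf : Measurable f) {C : ℝ} (hfb : ∀ y, |f y| ≤ C)
    (h : ∫⁻ y, ENNReal.ofReal |u y| ∂μ ≠ ∞) :
    Integrable (fun y => u y * f y) μ := by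
  refine ⟨(hu.mul hf).aestronglyMeasurable, ?_⟩
  have hb : ∫⁻ y, ‖u y * f y‖₊ ∂μ ≤ (∫⁻ y, ENNReal.ofReal |u y| ∂μ) * ENNReal.ofReal C := by
    rw [← lintegral_mul_const' _ _ (by simp : ENNReal.ofReal C ≠ ∞)]
    refine lintegral_mono fun y => ?_
    rw [← enorm_eq_nnnorm, Real.enorm_eq_ofReal_abs, abs_mul, ENNReal.ofReal_mul (abs_nonneg _)]
    exact mul_le_mul_right (ENNReal.ofReal_le_ofReal (hfb y)) _
  exact hb.trans_lt (ENNReal.mul_lt_top (lt_top_iff_ne_top.2 h) ENNReal.ofReal_lt_top)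

lemma sumInv (hU : SubMarkovResolvent U) {u v : E → ℝ} (hu : Measurable u) (hv : Measurable v)
    (huI : UInvariant m U u) (hvI : UInvariant m U v) : UInvariant m U (u + v) := by
  intro α hα f hf hfb
  obtain ⟨C, hC⟩ := hfb
  filter_upwards [lint_abs_le hU hu huI hα, lint_abs_le hU hv hvI hα,
    huI α hα f hf ⟨C, hC⟩, hvI α hα f hf ⟨C, hC⟩] with x h1 h2 h3 h4
  haveI := isFiniteMeasure_of_subMarkov hU hα x
  have iu : Integrable (fun y => u y * f y) (U α x) :=
    integrable_mul_of_bound hu hf hC (h1.trans_lt ENNReal.ofReal_lt_top).ne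
  have iv : Integrable (fun y => v y * f y) (U α x) :=
    integrable_mul_of_bound hv hf hC (h2.trans_lt ENNReal.ofReal_lt_top).ne
  have h3' : ∫ y, u y * f y ∂(U α x) = u x * ∫ y, f y ∂(U α x) := h3
  have h4' : ∫ y, v y * f y ∂(U α x) = v x * ∫ y, f y ∂(U α x) := h4
  show ∫ y, (u y + v y) * f y ∂(U α x) = (u x + v x) * ∫ y, f y ∂(U α x)
  simp_rw [add_mul]
  rw [integral_add iu iv, h3', h4']

lemma smulInv {u : E → ℝ} (huI : UInvariant m U u) (c : ℝ) :
    UInvariant m U (fun x => c * u x) := by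
  intro α hα f hf hfb
  filter_upwards [huI α hα f hf hfb] with x h3
  have h3' : ∫ y, u y * f y ∂(U α x) = u x * ∫ y, f y ∂(U α x) := h3
  show ∫ y, c * u y * f y ∂(U α x) = c * u x * ∫ y, f y ∂(U α x)
  simp_rw [mul_assoc]
  rw [integral_const_mul, h3']

/-- A strictly positive bounded weight `g` with `∫ g dm < ∞` and `∫ g|u| dm < ∞`. -/
lemma exists_weight (m : Measure E) [SigmaFinite m] {u : E → ℝ} (hu : Measurable u) :
    ∃ g : E → ℝ≥0∞, Measurable g ∧ (∀ x, 0 < g x) ∧ (∀ x, g x ≤ 2) ∧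
      ∫⁻ x, g x ∂m ≠ ∞ ∧ ∫⁻ x, g x * ENNReal.ofReal |u x| ∂m ≠ ∞ := by
  set A : ℕ → Set E := fun k => spanningSets m k ∩ {x | |u x| ≤ (k:ℝ)} with hA
  have hAm : ∀ k, MeasurableSet (A k) :=
    fun k => (measurableSet_spanningSets m k).inter (measurableSet_le hu.abs measurable_const)
  have hAfin : ∀ k, m (A k) ≠ ∞ := fun k =>
    ((measure_mono Set.inter_subset_left).trans_lt (measure_spanningSets_lt_top m k)).ne
  set c : ℕ → ℝ≥0∞ := fun k => (2⁻¹)^k * (((k:ℝ≥0∞)+1) * (m (A k) + 1))⁻¹ with hc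
  have hcc : ∀ k : ℕ, c k = (2⁻¹)^k * (((k:ℝ≥0∞)+1) * (m (A k) + 1))⁻¹ := fun _ => rfl
  have hcfin : ∀ k : ℕ, ((k:ℝ≥0∞)+1) * (m (A k) + 1) ≠ ∞ :=
    fun k => ENNReal.mul_ne_top (by simp) (by simp [hAfin k])
  have hc0 : ∀ k : ℕ, ((k:ℝ≥0∞)+1) * (m (A k) + 1) ≠ 0 :=
    fun k => mul_ne_zero (by simp) (by simp)
  have hck : ∀ k, c k ≤ (2⁻¹)^k := by
    intro k
    rw [hcc]
    refine mul_le_of_le_one_right' (ENNReal.inv_le_one.2 ?_)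
    calc (1:ℝ≥0∞) = 1 * 1 := (one_mul 1).symm
      _ ≤ ((k:ℝ≥0∞)+1) * (m (A k) + 1) := mul_le_mul' le_add_self le_add_self
  have hgeo : (∑' k : ℕ, ((2:ℝ≥0∞)⁻¹)^k) = 2 := by
    rw [ENNReal.tsum_geometric, ENNReal.one_sub_inv_two]
    simp
  have hkey : ∀ k : ℕ, c k * (k:ℝ≥0∞) * m (A k) ≤ (2⁻¹)^k := by
    intro k
    rw [hcc]
    have hX : (k:ℝ≥0∞) * m (A k) ≤ ((k:ℝ≥0∞)+1) * (m (A k) + 1) :=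
      mul_le_mul' (self_le_add_right _ 1) (self_le_add_right _ 1)
    calc (2⁻¹:ℝ≥0∞)^k * (((k:ℝ≥0∞)+1) * (m (A k) + 1))⁻¹ * (k:ℝ≥0∞) * m (A k)
        = 2⁻¹^k * ((((k:ℝ≥0∞)+1) * (m (A k) + 1))⁻¹ * ((k:ℝ≥0∞) * m (A k))) := by ring
      _ ≤ 2⁻¹^k * ((((k:ℝ≥0∞)+1) * (m (A k) + 1))⁻¹ * (((k:ℝ≥0∞)+1) * (m (A k) + 1))) :=
          mul_le_mul_right (mul_le_mul_right hX _) _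
      _ = 2⁻¹^k := by rw [ENNReal.inv_mul_cancel (hc0 k) (hcfin k), mul_one]
  refine ⟨fun x => ∑' k, (A k).indicator (fun _ => c k) x,
    Measurable.ennreal_tsum (fun k => measurable_const.indicator (hAm k)), ?_, ?_, ?_, ?_⟩
  · intro x
    obtain ⟨k₁, hk₁⟩ : ∃ k, x ∈ spanningSets m k := by
      have h1 : x ∈ ⋃ k, spanningSets m k := by rw [iUnion_spanningSets]; trivial
      exact Set.mem_iUnion.1 h1
    show (0:ℝ≥0∞) < ∑' k, (A k).indicator (fun _ => c k) x
    obtain ⟨k, hxA⟩ : ∃ k, x ∈ A k := by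
      refine ⟨max k₁ ⌈|u x|⌉₊, monotone_spanningSets m (le_max_left k₁ ⌈|u x|⌉₊) hk₁, ?_⟩
      exact (Nat.le_ceil _).trans ((Nat.cast_le (α := ℝ)).2 (le_max_right _ _))
    refine lt_of_lt_of_le ?_ (ENNReal.le_tsum (f := fun j => (A j).indicator (fun _ => c j) x) k)
    rw [Set.indicator_of_mem hxA, hcc]
    exact ENNReal.mul_pos (pow_ne_zero _ (by simp)) (ENNReal.inv_ne_zero.2 (hcfin k))
  · intro x
    calc (∑' k, (A k).indicator (fun _ => c k) x) ≤ ∑' k, c k := by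
          refine ENNReal.tsum_le_tsum fun k => ?_
          by_cases hx : x ∈ A k <;> simp [hx]
      _ ≤ ∑' k : ℕ, ((2:ℝ≥0∞)⁻¹)^k := ENNReal.tsum_le_tsum hck
      _ = 2 := hgeo
  · rw [lintegral_tsum (fun k => (measurable_const.indicator (hAm k)).aemeasurable)]
    refine ne_top_of_le_ne_top (by rw [hgeo]; simp) (ENNReal.tsum_le_tsum fun k => ?_)
    rw [lintegral_indicator_const (hAm k)]
    calc c k * m (A k) ≤ (2⁻¹)^k * ((((k:ℝ≥0∞)+1) * (m (A k) + 1))⁻¹ * (((k:ℝ≥0∞)+1) * (m (A k) + 1))) := by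
          rw [hcc, mul_assoc]
          refine mul_le_mul_right (mul_le_mul_right ?_ _) _
          calc m (A k) ≤ m (A k) + 1 := self_le_add_right _ 1
            _ ≤ ((k:ℝ≥0∞)+1) * (m (A k) + 1) := le_mul_of_one_le_left zero_le le_add_self
      _ = (2⁻¹)^k := by rw [ENNReal.inv_mul_cancel (hc0 k) (hcfin k), mul_one]
  · have heq : ∀ x, (∑' k, (A k).indicator (fun _ => c k) x) * ENNReal.ofReal |u x|
        = ∑' k, (A k).indicator (fun y => c k * ENNReal.ofReal |u y|) x := by
      intro x
      rw [← ENNReal.tsum_mul_right]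
      refine tsum_congr fun k => ?_
      by_cases hx : x ∈ A k <;> simp [hx]
    simp_rw [heq]
    rw [lintegral_tsum (f := fun k => (A k).indicator (fun y => c k * ENNReal.ofReal |u y|))
      (fun k => (Measurable.indicator (by fun_prop) (hAm k)).aemeasurable)]
    refine ne_top_of_le_ne_top (by rw [hgeo]; simp) (ENNReal.tsum_le_tsum fun k => ?_)
    rw [lintegral_indicator (hAm k)]
    calc ∫⁻ y in A k, c k * ENNReal.ofReal |u y| ∂m ≤ ∫⁻ _ in A k, c k * (k:ℝ≥0∞) ∂m := by
          refine setLIntegral_mono (by fun_prop) fun y hy => ?_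
          refine mul_le_mul_right ?_ _
          rw [show ((k:ℝ≥0∞)) = ENNReal.ofReal (k:ℝ) by simp]
          exact ENNReal.ofReal_le_ofReal hy.2
      _ = c k * (k:ℝ≥0∞) * m (A k) := setLIntegral_const _ _
      _ ≤ (2⁻¹)^k := hkey k

lemma absInv [SigmaFinite m] (hU : SubMarkovResolvent U) (hUhat : SubMarkovResolvent Uhat)
    (hm : SubInvariantMeasure m U) (hmhat : SubInvariantMeasure m Uhat)
    (hdual : WeakDuality m U Uhat)
    {u : E → ℝ} (hu : Measurable u) (huI : UInvariant m U u) :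
    UInvariant m U (fun x => |u x|) := by
  intro α hα f hf hfb
  obtain ⟨C, hC⟩ := hfb
  haveI := isFiniteKernel_of_subMarkov hU hα
  haveI := isFiniteKernel_of_subMarkov hUhat hα
  obtain ⟨g, hgm, hgpos, hgle, hg1, hgu⟩ := exists_weight m hu
  set a : E → ℝ≥0∞ := fun y => ENNReal.ofReal (u y) with ha
  set b : E → ℝ≥0∞ := fun y => ENNReal.ofReal (-u y) with hb
  have ham : Measurable a := ENNReal.measurable_ofReal.comp hu
  have hbm : Measurable b := ENNReal.measurable_ofReal.comp hu.neg
  have hab : ∀ y, a y + b y = ENNReal.ofReal |u y| := by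
    intro y
    rcases le_total 0 (u y) with h | h
    · rw [ha, hb]
      simp only [ENNReal.ofReal_of_nonpos (neg_nonpos.2 h), add_zero, abs_of_nonneg h]
    · rw [ha, hb]
      simp only [ENNReal.ofReal_of_nonpos h, zero_add, abs_of_nonpos h]
  have hmin : ∀ y, a y = 0 ∨ b y = 0 := by
    intro y
    rcases le_total 0 (u y) with h | h
    · exact Or.inr (ENNReal.ofReal_of_nonpos (neg_nonpos.2 h))
    · exact Or.inl (ENNReal.ofReal_of_nonpos h)
  have habs : ∀ y, a y ≤ ENNReal.ofReal |u y| := fun y => (hab y) ▸ le_self_add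
  have hbbs : ∀ y, b y ≤ ENNReal.ofReal |u y| := fun y => (hab y) ▸ le_add_self
  -- the dual pointwise inequality
  have hdualpt : ∀ᵐ x ∂m, ENNReal.ofReal |u x| * (∫⁻ y, g y ∂(Uhat α x))
      ≤ ∫⁻ y, ENNReal.ofReal |u y| * g y ∂(Uhat α x) := by
    have hh1m : Measurable fun x => (∫⁻ y, a y * g y ∂(Uhat α x)) + b x * ∫⁻ y, g y ∂(Uhat α x) :=
      (Measurable.lintegral_kernel (ham.mul hgm)).add (hbm.mul (Measurable.lintegral_kernel hgm))
    have hh2m : Measurable fun x => (∫⁻ y, b y * g y ∂(Uhat α x)) + a x * ∫⁻ y, g y ∂(Uhat α x) :=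
      (Measurable.lintegral_kernel (hbm.mul hgm)).add (ham.mul (Measurable.lintegral_kernel hgm))
    have heq12 : (fun x => (∫⁻ y, a y * g y ∂(Uhat α x)) + b x * ∫⁻ y, g y ∂(Uhat α x))
        =ᵐ[m] fun x => (∫⁻ y, b y * g y ∂(Uhat α x)) + a x * ∫⁻ y, g y ∂(Uhat α x) := by
      refine ae_eq_of_forall_setLIntegral_eq_of_sigmaFinite hh1m hh2m fun s hs hsfin => ?_
      set F : E → ℝ := s.indicator (fun _ => (1:ℝ)) with hF
      have hFm : Measurable F := measurable_const.indicator hs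
      have hFb : ∀ y, |F y| ≤ 1 := by
        intro y
        rw [hF]
        by_cases hy : y ∈ s <;> simp [Set.indicator_of_mem, Set.indicator_of_notMem, hy]
      set Ft : E → ℝ≥0∞ := s.indicator (fun _ => (1:ℝ≥0∞)) with hFt
      have hFtm : Measurable Ft := measurable_const.indicator hs
      have hFt1 : ∀ y, Ft y ≤ 1 := by
        intro y
        rw [hFt]
        by_cases hy : y ∈ s <;> simp [Set.indicator_of_mem, Set.indicator_of_notMem, hy]
      -- pointwise identity from invariance of u
      have hptF : ∀ᵐ x ∂m,
          (∫⁻ y, a y * Ft y ∂(U α x)) + b x * (∫⁻ y, Ft y ∂(U α x))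
          = (∫⁻ y, b y * Ft y ∂(U α x)) + a x * (∫⁻ y, Ft y ∂(U α x)) := by
        filter_upwards [huI α hα F hFm ⟨1, hFb⟩, lint_abs_le hU hu huI hα] with x hx hfin
        haveI := isFiniteMeasure_of_subMarkov hU hα x
        have hfin' : ∫⁻ y, ENNReal.ofReal |u y| ∂(U α x) ≠ ∞ :=
          (hfin.trans_lt ENNReal.ofReal_lt_top).ne
        have hIf : Integrable (fun y => u y * F y) (U α x) :=
          integrable_mul_of_bound hu hFm hFb hfin'
        have hXa : ∫⁻ y, a y * Ft y ∂(U α x) ≠ ∞ := by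
          refine ne_top_of_le_ne_top hfin' (lintegral_mono fun y => ?_)
          calc a y * Ft y ≤ a y * 1 := mul_le_mul_right (hFt1 y) _
            _ = a y := mul_one _
            _ ≤ _ := habs y
        have hXb : ∫⁻ y, b y * Ft y ∂(U α x) ≠ ∞ := by
          refine ne_top_of_le_ne_top hfin' (lintegral_mono fun y => ?_)
          calc b y * Ft y ≤ b y * 1 := mul_le_mul_right (hFt1 y) _
            _ = b y := mul_one _
            _ ≤ _ := hbbs y
        have hY : ∫⁻ y, Ft y ∂(U α x) ≠ ∞ := by
          refine ne_top_of_le_ne_top ?_ (lintegral_mono fun y => hFt1 y)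
          rw [lintegral_one]
          exact (measure_lt_top _ _).ne
        have e1 : ∫ y, u y * F y ∂(U α x)
            = (∫⁻ y, a y * Ft y ∂(U α x)).toReal - (∫⁻ y, b y * Ft y ∂(U α x)).toReal := by
          rw [integral_eq_lintegral_pos_part_sub_lintegral_neg_part hIf]
          congr 1
          · congr 1
            refine lintegral_congr fun y => ?_
            rw [hF, hFt]
            by_cases hy : y ∈ s
            · simp [Set.indicator_of_mem hy, ha]
            · simp [Set.indicator_of_notMem hy]
          · congr 1
            refine lintegral_congr fun y => ?_
            rw [hF, hFt]
            by_cases hy : y ∈ s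
            · simp [Set.indicator_of_mem hy, hb]
            · simp [Set.indicator_of_notMem hy]
        have e2 : ∫ y, F y ∂(U α x) = (∫⁻ y, Ft y ∂(U α x)).toReal := by
          rw [integral_eq_lintegral_of_nonneg_ae]
          · congr 1
            refine lintegral_congr fun y => ?_
            rw [hF, hFt]
            by_cases hy : y ∈ s
            · simp [Set.indicator_of_mem hy]
            · simp [Set.indicator_of_notMem hy]
          · filter_upwards with y
            rw [hF]
            by_cases hy : y ∈ s <;>
              simp [Set.indicator_of_mem, Set.indicator_of_notMem, hy]
          · exact hFm.aestronglyMeasurable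
        have hxr : (∫⁻ y, a y * Ft y ∂(U α x)).toReal - (∫⁻ y, b y * Ft y ∂(U α x)).toReal
            = u x * (∫⁻ y, Ft y ∂(U α x)).toReal := by
          rw [← e1, ← e2]
          exact hx
        have hux : u x = (a x).toReal - (b x).toReal := by
          rcases le_total 0 (u x) with h | h
          · rw [ha, hb]
            simp [ENNReal.ofReal_of_nonpos (neg_nonpos.2 h), ENNReal.toReal_ofReal h]
          · rw [ha, hb]
            simp only [ENNReal.ofReal_of_nonpos h, ENNReal.toReal_zero, zero_sub,
              ENNReal.toReal_ofReal (neg_nonneg.2 h)]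
            ring
        have hane : a x ≠ ∞ := ENNReal.ofReal_ne_top
        have hbne : b x ≠ ∞ := ENNReal.ofReal_ne_top
        refine (ENNReal.toReal_eq_toReal_iff'
          (by exact ENNReal.add_ne_top.2 ⟨hXa, ENNReal.mul_ne_top hbne hY⟩)
          (by exact ENNReal.add_ne_top.2 ⟨hXb, ENNReal.mul_ne_top hane hY⟩)).1 ?_
        rw [ENNReal.toReal_add hXa (ENNReal.mul_ne_top hbne hY),
          ENNReal.toReal_add hXb (ENNReal.mul_ne_top hane hY),
          ENNReal.toReal_mul, ENNReal.toReal_mul]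
        rw [hux] at hxr
        ring_nf at hxr ⊢
        linarith
      -- integrate the pointwise identity against g and use duality
      have hint : ∫⁻ x, g x * ((∫⁻ y, a y * Ft y ∂(U α x)) + b x * (∫⁻ y, Ft y ∂(U α x))) ∂m
          = ∫⁻ x, g x * ((∫⁻ y, b y * Ft y ∂(U α x)) + a x * (∫⁻ y, Ft y ∂(U α x))) ∂m := by
        refine lintegral_congr_ae ?_
        filter_upwards [hptF] with x hx
        rw [hx]
      have hWm : Measurable fun x => ∫⁻ y, Ft y ∂(U α x) := Measurable.lintegral_kernel hFtm
      have hexp1 : ∫⁻ x, g x * ((∫⁻ y, a y * Ft y ∂(U α x)) + b x * (∫⁻ y, Ft y ∂(U α x))) ∂m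
          = (∫⁻ x, g x * (∫⁻ y, a y * Ft y ∂(U α x)) ∂m)
            + ∫⁻ x, (b x * g x) * (∫⁻ y, Ft y ∂(U α x)) ∂m := by
        rw [← lintegral_add_left (hgm.fun_mul (Measurable.lintegral_kernel (ham.fun_mul hFtm)))]
        refine lintegral_congr fun x => ?_
        ring
      have hexp2 : ∫⁻ x, g x * ((∫⁻ y, b y * Ft y ∂(U α x)) + a x * (∫⁻ y, Ft y ∂(U α x))) ∂m
          = (∫⁻ x, g x * (∫⁻ y, b y * Ft y ∂(U α x)) ∂m)
            + ∫⁻ x, (a x * g x) * (∫⁻ y, Ft y ∂(U α x)) ∂m := by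
        rw [← lintegral_add_left (hgm.fun_mul (Measurable.lintegral_kernel (hbm.fun_mul hFtm)))]
        refine lintegral_congr fun x => ?_
        ring
      have d1 : ∫⁻ x, g x * (∫⁻ y, a y * Ft y ∂(U α x)) ∂m
          = ∫⁻ x, Ft x * (a x * (∫⁻ y, g y ∂(Uhat α x))) ∂m := by
        rw [hdual α hα g (fun y => a y * Ft y) hgm (ham.mul hFtm)]
        refine lintegral_congr fun x => ?_
        ring
      have d2 : ∫⁻ x, g x * (∫⁻ y, b y * Ft y ∂(U α x)) ∂m
          = ∫⁻ x, Ft x * (b x * (∫⁻ y, g y ∂(Uhat α x))) ∂m := by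
        rw [hdual α hα g (fun y => b y * Ft y) hgm (hbm.mul hFtm)]
        refine lintegral_congr fun x => ?_
        ring
      have d3 : ∫⁻ x, (a x * g x) * (∫⁻ y, Ft y ∂(U α x)) ∂m
          = ∫⁻ x, Ft x * (∫⁻ y, a y * g y ∂(Uhat α x)) ∂m := by
        rw [← hdual α hα (fun y => a y * g y) Ft (ham.mul hgm) hFtm]
      have d4 : ∫⁻ x, (b x * g x) * (∫⁻ y, Ft y ∂(U α x)) ∂m
          = ∫⁻ x, Ft x * (∫⁻ y, b y * g y ∂(Uhat α x)) ∂m := by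
        rw [← hdual α hα (fun y => b y * g y) Ft (hbm.mul hgm) hFtm]
      -- assemble: ∫⁻ in s, h₁ = ∫⁻ Ft * h₁ etc.
      have hres1 : ∫⁻ x in s, ((∫⁻ y, a y * g y ∂(Uhat α x)) + b x * ∫⁻ y, g y ∂(Uhat α x)) ∂m
          = (∫⁻ x, Ft x * (∫⁻ y, a y * g y ∂(Uhat α x)) ∂m)
            + ∫⁻ x, Ft x * (b x * (∫⁻ y, g y ∂(Uhat α x))) ∂m := by
        rw [← lintegral_indicator hs]
        rw [← lintegral_add_left (hFtm.fun_mul (Measurable.lintegral_kernel (ham.fun_mul hgm)))]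
        refine lintegral_congr fun x => ?_
        rw [hFt]
        by_cases hx : x ∈ s
        · simp [Set.indicator_of_mem hx, mul_add]
        · simp [Set.indicator_of_notMem hx]
      have hres2 : ∫⁻ x in s, ((∫⁻ y, b y * g y ∂(Uhat α x)) + a x * ∫⁻ y, g y ∂(Uhat α x)) ∂m
          = (∫⁻ x, Ft x * (∫⁻ y, b y * g y ∂(Uhat α x)) ∂m)
            + ∫⁻ x, Ft x * (a x * (∫⁻ y, g y ∂(Uhat α x))) ∂m := by
        rw [← lintegral_indicator hs]
        rw [← lintegral_add_left (hFtm.fun_mul (Measurable.lintegral_kernel (hbm.fun_mul hgm)))]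
        refine lintegral_congr fun x => ?_
        rw [hFt]
        by_cases hx : x ∈ s
        · simp [Set.indicator_of_mem hx, mul_add]
        · simp [Set.indicator_of_notMem hx]
      rw [hres1, hres2, ← d3, ← d4]
      rw [hexp1, hexp2] at hint
      rw [d1, d2] at hint
      calc (∫⁻ x, (a x * g x) * (∫⁻ y, Ft y ∂(U α x)) ∂m)
            + ∫⁻ x, Ft x * (b x * (∫⁻ y, g y ∂(Uhat α x))) ∂m
          = (∫⁻ x, Ft x * (b x * (∫⁻ y, g y ∂(Uhat α x))) ∂m)
            + ∫⁻ x, (a x * g x) * (∫⁻ y, Ft y ∂(U α x)) ∂m := add_comm _ _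
        _ = (∫⁻ x, Ft x * (a x * (∫⁻ y, g y ∂(Uhat α x))) ∂m)
            + ∫⁻ x, (b x * g x) * (∫⁻ y, Ft y ∂(U α x)) ∂m := hint.symm
        _ = (∫⁻ x, (b x * g x) * (∫⁻ y, Ft y ∂(U α x)) ∂m)
            + ∫⁻ x, Ft x * (a x * (∫⁻ y, g y ∂(Uhat α x))) ∂m := add_comm _ _
    -- deduce the pointwise inequality
    filter_upwards [heq12] with x hx
    have hadd : ∫⁻ y, ENNReal.ofReal |u y| * g y ∂(Uhat α x)
        = (∫⁻ y, a y * g y ∂(Uhat α x)) + ∫⁻ y, b y * g y ∂(Uhat α x) := by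
      rw [← lintegral_add_left (ham.fun_mul hgm)]
      refine lintegral_congr fun y => ?_
      rw [← hab y, add_mul]
    rw [hadd]
    rcases hmin x with h0 | h0
    · have hre : ENNReal.ofReal |u x| = b x := by rw [← hab x, h0, zero_add]
      rw [hre]
      calc b x * ∫⁻ y, g y ∂(Uhat α x)
          ≤ (∫⁻ y, a y * g y ∂(Uhat α x)) + b x * ∫⁻ y, g y ∂(Uhat α x) := le_add_self
        _ = (∫⁻ y, b y * g y ∂(Uhat α x)) + a x * ∫⁻ y, g y ∂(Uhat α x) := hx
        _ = (∫⁻ y, b y * g y ∂(Uhat α x)) := by rw [h0, zero_mul, add_zero]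
        _ ≤ _ := le_add_self
    · have hre : ENNReal.ofReal |u x| = a x := by rw [← hab x, h0, add_zero]
      rw [hre]
      calc a x * ∫⁻ y, g y ∂(Uhat α x)
          ≤ (∫⁻ y, b y * g y ∂(Uhat α x)) + a x * ∫⁻ y, g y ∂(Uhat α x) := le_add_self
        _ = (∫⁻ y, a y * g y ∂(Uhat α x)) + b x * ∫⁻ y, g y ∂(Uhat α x) := hx.symm
        _ = (∫⁻ y, a y * g y ∂(Uhat α x)) := by rw [h0, zero_mul, add_zero]
        _ ≤ _ := le_self_add
  -- main a.e. equality for nonneg bounded F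
  have key : ∀ (F : E → ℝ) (CF : ℝ), Measurable F → (∀ y, 0 ≤ F y) → (∀ y, F y ≤ CF) →
      (fun x => ∫⁻ y, ENNReal.ofReal |u y| * ENNReal.ofReal (F y) ∂(U α x))
      =ᵐ[m] fun x => ENNReal.ofReal |u x| * ∫⁻ y, ENNReal.ofReal (F y) ∂(U α x) := by
    intro F CF hFm hF0 hFC
    have hFb : ∀ y, |F y| ≤ CF := fun y => by rw [abs_of_nonneg (hF0 y)]; exact hFC y
    have hFtm : Measurable fun y => ENNReal.ofReal (F y) := ENNReal.measurable_ofReal.comp hFm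
    have habsm : Measurable fun y => ENNReal.ofReal |u y| := ENNReal.measurable_ofReal.comp hu.abs
    have hΨm : Measurable fun x => ∫⁻ y, ENNReal.ofReal |u y| * ENNReal.ofReal (F y) ∂(U α x) :=
      Measurable.lintegral_kernel (habsm.mul hFtm)
    have hWm : Measurable fun x => ∫⁻ y, ENNReal.ofReal (F y) ∂(U α x) :=
      Measurable.lintegral_kernel hFtm
    have hΦm : Measurable fun x => ENNReal.ofReal |u x| * ∫⁻ y, ENNReal.ofReal (F y) ∂(U α x) :=
      habsm.mul hWm
    have hWle : ∀ x, (∫⁻ y, ENNReal.ofReal (F y) ∂(U α x))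
        ≤ ENNReal.ofReal CF * ENNReal.ofReal α⁻¹ := by
      intro x
      calc ∫⁻ y, ENNReal.ofReal (F y) ∂(U α x) ≤ ∫⁻ _, ENNReal.ofReal CF ∂(U α x) :=
            lintegral_mono fun y => ENNReal.ofReal_le_ofReal (hFC y)
        _ = ENNReal.ofReal CF * (U α x) Set.univ := lintegral_const _
        _ ≤ _ := mul_le_mul_right (hU α hα x) _
    have hΦΨ : (fun x => ENNReal.ofReal |u x| * ∫⁻ y, ENNReal.ofReal (F y) ∂(U α x))
        ≤ᵐ[m] fun x => ∫⁻ y, ENNReal.ofReal |u y| * ENNReal.ofReal (F y) ∂(U α x) := by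
      filter_upwards [huI α hα F hFm ⟨CF, hFb⟩, lint_abs_le hU hu huI hα] with x hx hfin
      haveI := isFiniteMeasure_of_subMarkov hU hα x
      have hWne : (∫⁻ y, ENNReal.ofReal (F y) ∂(U α x)) ≠ ∞ :=
        ((hWle x).trans_lt (ENNReal.mul_lt_top ENNReal.ofReal_lt_top ENNReal.ofReal_lt_top)).ne
      have e2 : ∫ y, F y ∂(U α x) = (∫⁻ y, ENNReal.ofReal (F y) ∂(U α x)).toReal := by
        rw [integral_eq_lintegral_of_nonneg_ae (Filter.Eventually.of_forall hF0)
          hFm.aestronglyMeasurable]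
      have eΨ : ∫ y, |u y| * F y ∂(U α x)
          = (∫⁻ y, ENNReal.ofReal |u y| * ENNReal.ofReal (F y) ∂(U α x)).toReal := by
        rw [integral_eq_lintegral_of_nonneg_ae
          (Filter.Eventually.of_forall fun y => mul_nonneg (abs_nonneg _) (hF0 y))
          (hu.abs.mul hFm).aestronglyMeasurable]
        congr 1
        exact lintegral_congr fun y => ENNReal.ofReal_mul (abs_nonneg _)
      have hx' : ∫ y, u y * F y ∂(U α x) = u x * ∫ y, F y ∂(U α x) := hx
      have hFnonneg : 0 ≤ ∫ y, F y ∂(U α x) := integral_nonneg hF0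
      calc ENNReal.ofReal |u x| * ∫⁻ y, ENNReal.ofReal (F y) ∂(U α x)
          = ENNReal.ofReal |u x| * ENNReal.ofReal (∫ y, F y ∂(U α x)) := by
            rw [e2, ENNReal.ofReal_toReal hWne]
        _ = ENNReal.ofReal (|u x| * ∫ y, F y ∂(U α x)) := (ENNReal.ofReal_mul (abs_nonneg _)).symm
        _ = ENNReal.ofReal |u x * ∫ y, F y ∂(U α x)| := by
            rw [abs_mul, abs_of_nonneg hFnonneg]
        _ = ENNReal.ofReal |∫ y, u y * F y ∂(U α x)| := by rw [hx']
        _ ≤ ENNReal.ofReal (∫ y, |u y| * F y ∂(U α x)) := by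
            refine ENNReal.ofReal_le_ofReal ?_
            calc |∫ y, u y * F y ∂(U α x)|
                ≤ ∫ y, |u y| * |F y| ∂(U α x) := by
                  simpa [Real.norm_eq_abs, abs_mul] using
                    norm_integral_le_integral_norm (μ := U α x) (fun y => u y * F y)
              _ = ∫ y, |u y| * F y ∂(U α x) := by
                  refine integral_congr_ae (Filter.Eventually.of_forall fun y => ?_)
                  show |u y| * |F y| = |u y| * F y
                  rw [abs_of_nonneg (hF0 y)]
        _ = ENNReal.ofReal
            ((∫⁻ y, ENNReal.ofReal |u y| * ENNReal.ofReal (F y) ∂(U α x)).toReal) := by rw [eΨ]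
        _ ≤ _ := ENNReal.ofReal_toReal_le
    have hgΨΦ : ∫⁻ x, g x * (∫⁻ y, ENNReal.ofReal |u y| * ENNReal.ofReal (F y) ∂(U α x)) ∂m
        ≤ ∫⁻ x, g x * (ENNReal.ofReal |u x| * ∫⁻ y, ENNReal.ofReal (F y) ∂(U α x)) ∂m := by
      have d5 := hdual α hα g (fun y => ENNReal.ofReal |u y| * ENNReal.ofReal (F y)) hgm
        (habsm.mul hFtm)
      have d6 := hdual α hα (fun y => ENNReal.ofReal |u y| * g y) (fun y => ENNReal.ofReal (F y))
        (habsm.mul hgm) hFtm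
      rw [d5]
      calc ∫⁻ x, (ENNReal.ofReal |u x| * ENNReal.ofReal (F x)) * (∫⁻ y, g y ∂(Uhat α x)) ∂m
          ≤ ∫⁻ x, ENNReal.ofReal (F x) * (∫⁻ y, ENNReal.ofReal |u y| * g y ∂(Uhat α x)) ∂m := by
            refine lintegral_mono_ae ?_
            filter_upwards [hdualpt] with x hxx
            calc (ENNReal.ofReal |u x| * ENNReal.ofReal (F x)) * (∫⁻ y, g y ∂(Uhat α x))
                = ENNReal.ofReal (F x) * (ENNReal.ofReal |u x| * ∫⁻ y, g y ∂(Uhat α x)) := by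
                  ring
              _ ≤ _ := mul_le_mul_right hxx _
        _ = ∫⁻ x, (ENNReal.ofReal |u x| * g x) * (∫⁻ y, ENNReal.ofReal (F y) ∂(U α x)) ∂m :=
            d6.symm
        _ = _ := lintegral_congr fun x => by ring
    have hgΦfin : ∫⁻ x, g x * (ENNReal.ofReal |u x| * ∫⁻ y, ENNReal.ofReal (F y) ∂(U α x)) ∂m
        ≠ ∞ := by
      have hb : ∀ x, g x * (ENNReal.ofReal |u x| * ∫⁻ y, ENNReal.ofReal (F y) ∂(U α x))
          ≤ (ENNReal.ofReal CF * ENNReal.ofReal α⁻¹) * (g x * ENNReal.ofReal |u x|) := by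
        intro x
        calc g x * (ENNReal.ofReal |u x| * ∫⁻ y, ENNReal.ofReal (F y) ∂(U α x))
            ≤ g x * (ENNReal.ofReal |u x| * (ENNReal.ofReal CF * ENNReal.ofReal α⁻¹)) :=
              mul_le_mul_right (mul_le_mul_right (hWle x) _) _
          _ = (ENNReal.ofReal CF * ENNReal.ofReal α⁻¹) * (g x * ENNReal.ofReal |u x|) := by ring
      refine ne_top_of_le_ne_top ?_ (lintegral_mono hb)
      rw [lintegral_const_mul' _ _
        (ENNReal.mul_ne_top ENNReal.ofReal_ne_top ENNReal.ofReal_ne_top)]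
      exact ENNReal.mul_ne_top
        (ENNReal.mul_ne_top ENNReal.ofReal_ne_top ENNReal.ofReal_ne_top) hgu
    have hgle' : (fun x => g x * (ENNReal.ofReal |u x| * ∫⁻ y, ENNReal.ofReal (F y) ∂(U α x)))
        ≤ᵐ[m] fun x => g x * (∫⁻ y, ENNReal.ofReal |u y| * ENNReal.ofReal (F y) ∂(U α x)) :=
      hΦΨ.mono fun x hx => mul_le_mul_right hx _
    have heqint : ∫⁻ x, g x * (∫⁻ y, ENNReal.ofReal |u y| * ENNReal.ofReal (F y) ∂(U α x)) ∂m
        = ∫⁻ x, g x * (ENNReal.ofReal |u x| * ∫⁻ y, ENNReal.ofReal (F y) ∂(U α x)) ∂m :=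
      le_antisymm hgΨΦ (lintegral_mono_ae hgle')
    have hzero : ∫⁻ x, (g x * (∫⁻ y, ENNReal.ofReal |u y| * ENNReal.ofReal (F y) ∂(U α x))
        - g x * (ENNReal.ofReal |u x| * ∫⁻ y, ENNReal.ofReal (F y) ∂(U α x))) ∂m = 0 := by
      rw [lintegral_sub (hgm.fun_mul hΦm) hgΦfin hgle', heqint, tsub_self]
    have hae0 := (lintegral_eq_zero_iff ((hgm.mul hΨm).sub (hgm.mul hΦm))).1 hzero
    filter_upwards [hae0, hgle'] with x hx1 hx2
    have hgg : g x * (∫⁻ y, ENNReal.ofReal |u y| * ENNReal.ofReal (F y) ∂(U α x))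
        = g x * (ENNReal.ofReal |u x| * ∫⁻ y, ENNReal.ofReal (F y) ∂(U α x)) :=
      le_antisymm (tsub_eq_zero_iff_le.1 hx1) hx2
    exact (ENNReal.mul_right_inj (hgpos x).ne' ((hgle x).trans_lt (by norm_num)).ne).1 hgg
  -- final assembly via positive and negative parts of f
  have hF1m : Measurable fun y => max (f y) 0 := hf.max measurable_const
  have hF2m : Measurable fun y => max (-f y) 0 := hf.neg.max measurable_const
  have hF10 : ∀ y, 0 ≤ max (f y) 0 := fun y => le_max_right _ _
  have hF20 : ∀ y, 0 ≤ max (-f y) 0 := fun y => le_max_right _ _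
  have hF1C : ∀ y, max (f y) 0 ≤ max C 0 :=
    fun y => max_le_max ((le_abs_self _).trans (hC y)) le_rfl
  have hF2C : ∀ y, max (-f y) 0 ≤ max C 0 :=
    fun y => max_le_max ((neg_le_abs _).trans (hC y)) le_rfl
  filter_upwards [key (fun y => max (f y) 0) (max C 0) hF1m hF10 hF1C,
    key (fun y => max (-f y) 0) (max C 0) hF2m hF20 hF2C,
    lint_abs_le hU hu huI hα] with x k1 k2 hfin
  haveI := isFiniteMeasure_of_subMarkov hU hα x
  have hfin' : ∫⁻ y, ENNReal.ofReal |u y| ∂(U α x) ≠ ∞ :=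
    (hfin.trans_lt ENNReal.ofReal_lt_top).ne
  have hfinabs : ∫⁻ y, ENNReal.ofReal |(|u y|)| ∂(U α x) ≠ ∞ := by simpa [abs_abs] using hfin'
  have hIF1 : Integrable (fun y => |u y| * max (f y) 0) (U α x) :=
    integrable_mul_of_bound hu.abs hF1m
      (fun y => by rw [abs_of_nonneg (hF10 y)]; exact hF1C y) hfinabs
  have hIF2 : Integrable (fun y => |u y| * max (-f y) 0) (U α x) :=
    integrable_mul_of_bound hu.abs hF2m
      (fun y => by rw [abs_of_nonneg (hF20 y)]; exact hF2C y) hfinabs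
  have hIf1 : Integrable (fun y => max (f y) 0) (U α x) :=
    integrable_of_bdd hF1m (fun y => by rw [abs_of_nonneg (hF10 y)]; exact hF1C y)
  have hIf2 : Integrable (fun y => max (-f y) 0) (U α x) :=
    integrable_of_bdd hF2m (fun y => by rw [abs_of_nonneg (hF20 y)]; exact hF2C y)
  have hsplit : ∀ y, f y = max (f y) 0 - max (-f y) 0 := by
    intro y
    rcases le_total 0 (f y) with h | h
    · rw [max_eq_left h, max_eq_right (neg_nonpos.2 h), sub_zero]
    · rw [max_eq_right h, max_eq_left (neg_nonneg.2 h)]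
      ring
  have e21 : ∫ y, max (f y) 0 ∂(U α x)
      = (∫⁻ y, ENNReal.ofReal (max (f y) 0) ∂(U α x)).toReal :=
    integral_eq_lintegral_of_nonneg_ae (Filter.Eventually.of_forall hF10)
      hF1m.aestronglyMeasurable
  have e22 : ∫ y, max (-f y) 0 ∂(U α x)
      = (∫⁻ y, ENNReal.ofReal (max (-f y) 0) ∂(U α x)).toReal :=
    integral_eq_lintegral_of_nonneg_ae (Filter.Eventually.of_forall hF20)
      hF2m.aestronglyMeasurable
  have eΨ1 : ∫ y, |u y| * max (f y) 0 ∂(U α x)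
      = (∫⁻ y, ENNReal.ofReal |u y| * ENNReal.ofReal (max (f y) 0) ∂(U α x)).toReal := by
    rw [integral_eq_lintegral_of_nonneg_ae
      (Filter.Eventually.of_forall fun y => mul_nonneg (abs_nonneg _) (hF10 y))
      (hu.abs.mul hF1m).aestronglyMeasurable]
    congr 1
    exact lintegral_congr fun y => ENNReal.ofReal_mul (abs_nonneg _)
  have eΨ2 : ∫ y, |u y| * max (-f y) 0 ∂(U α x)
      = (∫⁻ y, ENNReal.ofReal |u y| * ENNReal.ofReal (max (-f y) 0) ∂(U α x)).toReal := by
    rw [integral_eq_lintegral_of_nonneg_ae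
      (Filter.Eventually.of_forall fun y => mul_nonneg (abs_nonneg _) (hF20 y))
      (hu.abs.mul hF2m).aestronglyMeasurable]
    congr 1
    exact lintegral_congr fun y => ENNReal.ofReal_mul (abs_nonneg _)
  show ∫ y, |u y| * f y ∂(U α x) = |u x| * ∫ y, f y ∂(U α x)
  have hL : ∫ y, |u y| * f y ∂(U α x)
      = ∫ y, |u y| * max (f y) 0 ∂(U α x) - ∫ y, |u y| * max (-f y) 0 ∂(U α x) := by
    rw [← integral_sub hIF1 hIF2]
    refine integral_congr_ae (Filter.Eventually.of_forall fun y => ?_)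
    show |u y| * f y = |u y| * max (f y) 0 - |u y| * max (-f y) 0
    rcases le_total 0 (f y) with h | h
    · rw [max_eq_left h, max_eq_right (neg_nonpos.2 h)]; ring
    · rw [max_eq_right h, max_eq_left (neg_nonneg.2 h)]; ring
  have hR : ∫ y, f y ∂(U α x)
      = ∫ y, max (f y) 0 ∂(U α x) - ∫ y, max (-f y) 0 ∂(U α x) := by
    rw [← integral_sub hIf1 hIf2]
    refine integral_congr_ae (Filter.Eventually.of_forall fun y => ?_)
    show f y = max (f y) 0 - max (-f y) 0
    exact hsplit y
  rw [hL, hR, eΨ1, eΨ2, k1, k2, ENNReal.toReal_mul, ENNReal.toReal_mul,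
    ENNReal.toReal_ofReal (abs_nonneg _), ← e21, ← e22]
  ring

end Aux

/-- The set of `U`-invariant functions in `L^p(E,m)` is a vector lattice for
the pointwise order: it is stable under sums, scalar multiples, pointwise max and min. -/
theorem uInvariant_vector_lattice
    {E : Type*} [MeasurableSpace E] (m : Measure E) [SigmaFinite m]
    (U Uhat : ℝ → Kernel E E)
    (hU : SubMarkovResolvent U) (hUhat : SubMarkovResolvent Uhat)
    (hm : SubInvariantMeasure m U) (hmhat : SubInvariantMeasure m Uhat)
    (hdual : WeakDuality m U Uhat)
    (p : ℝ≥0∞) (c : ℝ) (u v : E → ℝ)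
    (hu : MemLp u p m) (hv : MemLp v p m)
    (huI : UInvariant m U u) (hvI : UInvariant m U v) :
    (MemLp (u + v) p m ∧ UInvariant m U (u + v)) ∧
    (MemLp (c • u) p m ∧ UInvariant m U (c • u)) ∧
    (MemLp (fun x => max (u x) (v x)) p m ∧ UInvariant m U fun x => max (u x) (v x)) ∧
    (MemLp (fun x => min (u x) (v x)) p m ∧ UInvariant m U fun x => min (u x) (v x)) := by
  have pmax : ∀ a b : ℝ, max a b = 2⁻¹ * ((a + b) + |a - b|) := by
    intro a b
    rcases le_total a b with h | h
    · rw [max_eq_right h, abs_of_nonpos (sub_nonpos.2 h)]; ring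
    · rw [max_eq_left h, abs_of_nonneg (sub_nonneg.2 h)]; ring
  have pmin : ∀ a b : ℝ, min a b = 2⁻¹ * ((a + b) - |a - b|) := by
    intro a b
    rcases le_total a b with h | h
    · rw [min_eq_left h, abs_of_nonpos (sub_nonpos.2 h)]; ring
    · rw [min_eq_right h, abs_of_nonneg (sub_nonneg.2 h)]; ring
  obtain ⟨u', hu'm, hu'e⟩ : ∃ u' : E → ℝ, Measurable u' ∧ u =ᵐ[m] u' :=
    ⟨hu.1.mk u, hu.1.stronglyMeasurable_mk.measurable, hu.1.ae_eq_mk⟩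
  obtain ⟨v', hv'm, hv'e⟩ : ∃ v' : E → ℝ, Measurable v' ∧ v =ᵐ[m] v' :=
    ⟨hv.1.mk v, hv.1.stronglyMeasurable_mk.measurable, hv.1.ae_eq_mk⟩
  have hu'I : UInvariant m U u' := uinv_congr hm hU hu'e huI
  have hv'I : UInvariant m U v' := uinv_congr hm hU hv'e hvI
  have habsLp : MemLp (fun x => |u x - v x|) p m := by
    have h := (hu.sub hv).norm
    refine MemLp.ae_eq (Filter.Eventually.of_forall fun x => ?_) h
    show ‖u x - v x‖ = |u x - v x|
    rw [Real.norm_eq_abs]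
  -- invariance of the difference and its absolute value (for measurable versions)
  have hw1I : UInvariant m U (fun x => u' x - v' x) := by
    have h := sumInv hU hu'm (measurable_const.mul hv'm) hu'I (smulInv hv'I (-1))
    refine uinv_congr hm hU (Filter.Eventually.of_forall fun x => ?_) h
    show u' x + (-1) * v' x = u' x - v' x
    ring
  have hw2I : UInvariant m U (fun x => |u' x - v' x|) :=
    absInv hU hUhat hm hmhat hdual (hu'm.sub hv'm) hw1I
  have hsum'I : UInvariant m U (u' + v') := sumInv hU hu'm hv'm hu'I hv'I
  have hbigI : UInvariant m U (fun x => (u' x + v' x) + |u' x - v' x|) := by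
    have h := sumInv hU (hu'm.add hv'm) (hu'm.sub hv'm).abs hsum'I hw2I
    exact uinv_congr hm hU (Filter.Eventually.of_forall fun _ => rfl) h
  have hbigI2 : UInvariant m U (fun x => (u' x + v' x) + (-1) * |u' x - v' x|) := by
    have h := sumInv hU (hu'm.add hv'm) (measurable_const.mul (hu'm.sub hv'm).abs)
      hsum'I (smulInv hw2I (-1))
    exact uinv_congr hm hU (Filter.Eventually.of_forall fun _ => rfl) h
  refine ⟨⟨hu.add hv, ?_⟩, ⟨hu.const_smul c, ?_⟩, ⟨?_, ?_⟩, ⟨?_, ?_⟩⟩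
  · -- invariance of the sum
    refine uinv_congr hm hU ?_ (sumInv hU hu'm hv'm hu'I hv'I)
    filter_upwards [hu'e, hv'e] with x h1 h2
    show u' x + v' x = u x + v x
    rw [h1, h2]
  · -- invariance of the scalar multiple
    exact smulInv huI c
  · -- MemLp of the max
    have h := ((hu.add hv).add habsLp).const_smul (2⁻¹ : ℝ)
    refine MemLp.ae_eq (Filter.Eventually.of_forall fun x => ?_) h
    show 2⁻¹ * ((u x + v x) + |u x - v x|) = max (u x) (v x)
    rw [pmax]
  · -- invariance of the max
    refine uinv_congr hm hU ?_ (smulInv hbigI 2⁻¹)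
    filter_upwards [hu'e, hv'e] with x h1 h2
    show 2⁻¹ * ((u' x + v' x) + |u' x - v' x|) = max (u x) (v x)
    rw [← h1, ← h2, pmax]
  · -- MemLp of the min
    have h := ((hu.add hv).sub habsLp).const_smul (2⁻¹ : ℝ)
    refine MemLp.ae_eq (Filter.Eventually.of_forall fun x => ?_) h
    show 2⁻¹ * ((u x + v x) - |u x - v x|) = min (u x) (v x)
    rw [pmin]
  · -- invariance of the min
    refine uinv_congr hm hU ?_ (smulInv hbigI2 2⁻¹)
    filter_upwards [hu'e, hv'e] with x h1 h2
    show 2⁻¹ * ((u' x + v' x) + (-1) * |u' x - v' x|) = min (u x) (v x)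
    rw [← h1, ← h2, pmin]
    ring
end

section
/- Let U and Û be sub-Markovian resolvents on L^p and L^{p*} in weak duality with respect to a σ-finite sub-invariant measure m. If u ∈ L^p(E,m), 1 ≤ p < ∞, satisfies αU_α u = u m-a.e. for all α > 0, then αÛ_α u = u m-a.e. for all α > 0, and conversely. -/
open MeasureTheory ProbabilityTheory Filter
open scoped NNReal ENNReal

namespace ResAux

variable {E : Type*} [MeasurableSpace E] {m : Measure E}

/-- The scaled kernel operator on `ℝ≥0∞`-valued functions. -/
noncomputable def Top (U : ℝ → Kernel E E) (α : ℝ) (f : E → ℝ≥0∞) (x : E) : ℝ≥0∞ :=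
  ENNReal.ofReal α * ∫⁻ y, f y ∂(U α x)

lemma isFiniteKernel {U : ℝ → Kernel E E} (hU : SubMarkovResolvent U) {α : ℝ} (hα : 0 < α) :
    IsFiniteKernel (U α) :=
  ⟨⟨ENNReal.ofReal α⁻¹, ENNReal.ofReal_lt_top, fun x => hU α hα x⟩⟩

lemma ofReal_mul_inv {α : ℝ} (hα : 0 < α) :
    ENNReal.ofReal α * ENNReal.ofReal α⁻¹ = 1 := by
  rw [← ENNReal.ofReal_mul hα.le, mul_inv_cancel₀ hα.ne', ENNReal.ofReal_one]

lemma Top_measurable {U : ℝ → Kernel E E} (hU : SubMarkovResolvent U) {α : ℝ} (hα : 0 < α)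
    {f : E → ℝ≥0∞} (hf : Measurable f) : Measurable (Top U α f) := by
  haveI := isFiniteKernel hU hα
  exact (hf.lintegral_kernel (κ := U α)).const_mul _

lemma Top_mono {U : ℝ → Kernel E E} {α : ℝ} {f g : E → ℝ≥0∞} (h : ∀ y, f y ≤ g y) (x : E) :
    Top U α f x ≤ Top U α g x :=
  mul_le_mul_right (lintegral_mono h) _

lemma Top_add {U : ℝ → Kernel E E} {α : ℝ} {f g : E → ℝ≥0∞} (hf : Measurable f) (x : E) :
    Top U α (fun y => f y + g y) x = Top U α f x + Top U α g x := by
  simp only [Top, lintegral_add_left hf, mul_add]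

lemma Top_const_le {U : ℝ → Kernel E E} (hU : SubMarkovResolvent U) {α : ℝ} (hα : 0 < α)
    (c : ℝ≥0∞) (x : E) : Top U α (fun _ => c) x ≤ c := by
  simp only [Top, lintegral_const]
  calc ENNReal.ofReal α * (c * (U α x) Set.univ)
      ≤ ENNReal.ofReal α * (c * ENNReal.ofReal α⁻¹) :=
        mul_le_mul_right (mul_le_mul_right (hU α hα x) c) _
    _ = c * (ENNReal.ofReal α * ENNReal.ofReal α⁻¹) := by ring
    _ = c := by rw [ofReal_mul_inv hα, mul_one]

lemma Top_subinv {U : ℝ → Kernel E E} (hm : SubInvariantMeasure m U) {α : ℝ} (hα : 0 < α)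
    {f : E → ℝ≥0∞} (hf : Measurable f) : ∫⁻ x, Top U α f x ∂m ≤ ∫⁻ x, f x ∂m :=
  hm α hα f hf

/-- If `f ≤ g` a.e. but `∫ g ≤ ∫ f < ∞`, then `f = g` a.e. -/
lemma sandwich {f g : E → ℝ≥0∞} (hf : Measurable f) (hg : Measurable g)
    (hfg : ∀ᵐ x ∂m, f x ≤ g x) (hfin : ∫⁻ x, f x ∂m ≠ ∞)
    (hle : ∫⁻ x, g x ∂m ≤ ∫⁻ x, f x ∂m) : g =ᵐ[m] f := by
  have hsub : ∫⁻ x, g x - f x ∂m = ∫⁻ x, g x ∂m - ∫⁻ x, f x ∂m :=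
    lintegral_sub hf hfin hfg
  have h0 : ∫⁻ x, g x - f x ∂m = 0 := by
    rw [hsub]; exact tsub_eq_zero_of_le hle
  have := (lintegral_eq_zero_iff (hg.sub hf)).mp h0
  filter_upwards [this, hfg] with x h1 h2
  exact le_antisymm (tsub_eq_zero_iff_le.mp h1) h2

/-- Cauchy-Schwarz for lintegral. -/
lemma cs_lintegral (μ : Measure E) {f : E → ℝ≥0∞} (hf : Measurable f) :
    (∫⁻ y, f y ∂μ) ^ 2 ≤ μ Set.univ * ∫⁻ y, f y ^ 2 ∂μ := by
  have hpq : Real.HolderConjugate 2 2 := Real.HolderConjugate.two_two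
  have h1 := ENNReal.lintegral_mul_le_Lp_mul_Lq μ hpq hf.aemeasurable
    (aemeasurable_const (b := (1:ℝ≥0∞)))
  simp only [Pi.mul_apply, mul_one, ENNReal.one_rpow, lintegral_const] at h1
  have h2 := ENNReal.rpow_le_rpow h1 (by norm_num : (0:ℝ) ≤ 2)
  rw [ENNReal.mul_rpow_of_nonneg _ _ (by norm_num : (0:ℝ) ≤ 2), ← ENNReal.rpow_mul,
    ← ENNReal.rpow_mul] at h2
  norm_num at h2
  exact h2.trans_eq (mul_comm _ _)

lemma enn_sq {a b : ℝ≥0∞} (ha : a ≠ ∞) (hb : b ≠ ∞) :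
    (a - b) ^ 2 + (b - a) ^ 2 + 2 * (a * b) = a ^ 2 + b ^ 2 := by
  lift a to ℝ≥0 using ha
  lift b to ℝ≥0 using hb
  rw [← ENNReal.coe_sub, ← ENNReal.coe_sub]
  norm_cast
  rcases le_total a b with h | h
  · rw [tsub_eq_zero_of_le h]
    apply NNReal.coe_injective
    push_cast [NNReal.coe_sub h]
    ring
  · rw [tsub_eq_zero_of_le h]
    apply NNReal.coe_injective
    push_cast [NNReal.coe_sub h]
    ring

lemma le_rpow_add_one {p' : ℝ} (hp' : 1 ≤ p') (a : ℝ≥0∞) : a ≤ a ^ p' + 1 := by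
  rcases le_total a 1 with h | h
  · exact h.trans (le_add_self)
  · calc a = a ^ (1:ℝ) := (ENNReal.rpow_one a).symm
      _ ≤ a ^ p' := ENNReal.rpow_le_rpow_of_exponent_le h hp'
      _ ≤ a ^ p' + 1 := le_self_add

lemma sub_const_le_rpow {p' : ℝ} (hp' : 1 ≤ p') {a c : ℝ≥0∞} (ha : a ≠ ∞)
    (hc0 : c ≠ 0) (hct : c ≠ ∞) : a - c ≤ (c ^ (p' - 1))⁻¹ * a ^ p' := by
  rcases le_total a c with h | h
  · rw [tsub_eq_zero_of_le h]; exact zero_le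
  · have ha0 : a ≠ 0 := fun h0 => hc0 (le_antisymm (h0 ▸ h) (zero_le))
    have key : (a - c) * c ^ (p' - 1) ≤ a ^ p' := by
      calc (a - c) * c ^ (p' - 1) ≤ a * a ^ (p' - 1) :=
            mul_le_mul' (tsub_le_self) (ENNReal.rpow_le_rpow h (by linarith))
        _ = a ^ (1 + (p' - 1)) := by rw [ENNReal.rpow_add _ _ ha0 ha, ENNReal.rpow_one]
        _ = a ^ p' := by ring_nf
    have hK0 : c ^ (p' - 1) ≠ 0 := by
      simp [ENNReal.rpow_eq_zero_iff, hc0, hct]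
    have hKt : c ^ (p' - 1) ≠ ∞ := by
      simp [ENNReal.rpow_eq_top_iff, hc0, hct]
    calc a - c = (c ^ (p' - 1))⁻¹ * ((a - c) * c ^ (p' - 1)) := by
          rw [mul_comm ((c ^ (p' - 1))⁻¹), mul_assoc, ENNReal.mul_inv_cancel hK0 hKt, mul_one]
      _ ≤ (c ^ (p' - 1))⁻¹ * a ^ p' := mul_le_mul_right key _

lemma ae_ae_eq_kernel {U : ℝ → Kernel E E} (hU : SubMarkovResolvent U)
    (hm : SubInvariantMeasure m U) {α : ℝ} (hα : 0 < α) {u w : E → ℝ}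
    (h : u =ᵐ[m] w) : ∀ᵐ x ∂m, u =ᵐ[U α x] w := by
  haveI := isFiniteKernel hU hα
  set s : Set E := {x | u x ≠ w x} with hs_def
  have hs : m s = 0 := h
  set N := toMeasurable m s with hN_def
  have hNmeas : MeasurableSet N := measurableSet_toMeasurable m s
  have hmN : m N = 0 := by rw [hN_def, measure_toMeasurable]; exact hs
  have hfmeas : Measurable (N.indicator (fun _ => (1:ℝ≥0∞))) :=
    measurable_const.indicator hNmeas
  have h1 : ∫⁻ x, ENNReal.ofReal α * ∫⁻ y, N.indicator (fun _ => (1:ℝ≥0∞)) y ∂(U α x) ∂m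
      ≤ ∫⁻ x, N.indicator (fun _ => (1:ℝ≥0∞)) x ∂m := hm α hα _ hfmeas
  rw [lintegral_indicator_const hNmeas, one_mul, hmN] at h1
  have h2 : ∀ᵐ x ∂m, ENNReal.ofReal α * ∫⁻ y, N.indicator (fun _ => (1:ℝ≥0∞)) y ∂(U α x) = 0 := by
    apply (lintegral_eq_zero_iff ((hfmeas.lintegral_kernel (κ := U α)).const_mul _)).mp
    exact le_antisymm h1 (zero_le)
  filter_upwards [h2] with x hx
  have hα0 : ENNReal.ofReal α ≠ 0 := by simp [hα, hα.le]
  have : (U α x) N = 0 := by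
    rw [lintegral_indicator_const hNmeas, one_mul] at hx
    exact (mul_eq_zero.mp hx).resolve_left hα0
  have hsub : (U α x) s = 0 := measure_mono_null (subset_toMeasurable m s) this
  exact hsub

variable {U Uhat : ℝ → Kernel E E} {α : ℝ}

/-- Step B: if `Tf = f + h` a.e. then the truncation `f - c` is `T`-fixed, and `h`
vanishes a.e. on `{c ≤ f}`. -/
lemma stepB (hU : SubMarkovResolvent U) (hm : SubInvariantMeasure m U) (hα : 0 < α)
    {f h : E → ℝ≥0∞} (hfm : Measurable f) (hhm : Measurable h)
    (hfix : ∀ᵐ x ∂m, Top U α f x = f x + h x)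
    {c : ℝ≥0∞} (hct : c ≠ ∞)
    (hint : ∫⁻ x, (f x - c) ∂m ≠ ∞) :
    (Top U α (fun x => f x - c) =ᵐ[m] fun x => f x - c) ∧ (∀ᵐ x ∂m, c ≤ f x → h x = 0) := by
  set g : E → ℝ≥0∞ := fun x => f x - c with hg_def
  have hgm : Measurable g := hfm.sub measurable_const
  set k : E → ℝ≥0∞ := fun x => if c ≤ f x then h x else 0 with hk_def
  have hkm : Measurable k := Measurable.ite (measurableSet_le measurable_const hfm) hhm
    measurable_const
  have claim1 : ∀ᵐ x ∂m, g x + k x ≤ Top U α g x := by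
    filter_upwards [hfix] with x hx
    have hchain : f x + h x ≤ Top U α g x + c := by
      rw [← hx]
      calc Top U α f x ≤ Top U α (fun y => g y + c) x := Top_mono (fun y => le_tsub_add) x
        _ = Top U α g x + Top U α (fun _ => c) x := Top_add hgm x
        _ ≤ Top U α g x + c := add_le_add_right (Top_const_le hU hα c x) _
    by_cases hcx : c ≤ f x
    · simp only [hk_def, hcx, if_true]
      have e : g x + h x = f x + h x - c := ENNReal.sub_add_eq_add_sub hcx hct
      rw [e]
      exact tsub_le_iff_right.mpr hchain
    · simp only [hk_def, hcx, if_false, add_zero, hg_def]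
      rw [tsub_eq_zero_of_le (le_of_not_ge hcx)]
      exact zero_le
  have hsum : ∫⁻ x, g x ∂m + ∫⁻ x, k x ∂m ≤ ∫⁻ x, g x ∂m + 0 := by
    rw [← lintegral_add_left hgm, add_zero]
    exact (lintegral_mono_ae claim1).trans (Top_subinv hm hα hgm)
  have hk0 : ∫⁻ x, k x ∂m = 0 :=
    le_antisymm (ENNReal.le_of_add_le_add_left hint hsum) (zero_le)
  have hkae : ∀ᵐ x ∂m, k x = 0 := (lintegral_eq_zero_iff hkm).mp hk0
  constructor
  · apply sandwich hgm (Top_measurable hU hα hgm) _ hint (Top_subinv hm hα hgm)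
    filter_upwards [claim1] with x hx
    exact le_trans le_self_add hx
  · filter_upwards [hkae] with x hx hcx
    simpa [hk_def, hcx] using hx

/-- Step C: bounded truncations of a nonnegative integrable fixed function are fixed. -/
lemma stepC (hU : SubMarkovResolvent U) (hm : SubInvariantMeasure m U) (hα : 0 < α)
    {G : E → ℝ≥0∞} (hGm : Measurable G) (hGt : ∀ x, G x ≠ ∞)
    (hint : ∫⁻ x, G x ∂m ≠ ∞) (hfix : Top U α G =ᵐ[m] G) {d : ℝ≥0∞} (hdt : d ≠ ∞) :
    Top U α (fun x => min (G x) d) =ᵐ[m] fun x => min (G x) d := by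
  set G1 : E → ℝ≥0∞ := fun x => min (G x) d with hG1_def
  set G2 : E → ℝ≥0∞ := fun x => G x - d with hG2_def
  have hG1m : Measurable G1 := hGm.min measurable_const
  have hG2m : Measurable G2 := hGm.sub measurable_const
  have hsplit : ∀ x, G1 x + G2 x = G x := by
    intro x
    rcases le_total (G x) d with hle | hle
    · simp [hG1_def, hG2_def, min_eq_left hle, tsub_eq_zero_of_le hle]
    · simp only [hG1_def, hG2_def, min_eq_right hle]
      rw [add_comm]
      exact tsub_add_cancel_of_le hle
  have hfun : (fun y => G1 y + G2 y) = G := funext hsplit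
  have hTsplit : ∀ x, Top U α G1 x + Top U α G2 x = Top U α G x := by
    intro x
    rw [← Top_add hG1m x, hfun]
  have hG1le : ∀ᵐ x ∂m, Top U α G1 x ≤ G1 x := by
    filter_upwards [hfix] with x hx
    refine le_min ?_ ?_
    · calc Top U α G1 x ≤ Top U α G x := Top_mono (fun y => min_le_left _ _) x
        _ = G x := hx
    · calc Top U α G1 x ≤ Top U α (fun _ => d) x := Top_mono (fun y => min_le_right _ _) x
        _ ≤ d := Top_const_le hU hα d x
  have hG2ge : ∀ᵐ x ∂m, G2 x ≤ Top U α G2 x := by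
    filter_upwards [hfix, hG1le] with x hx h1
    have heq : G1 x + G2 x = Top U α G1 x + Top U α G2 x := by
      rw [hTsplit x, hx, hsplit x]
    have h1t : Top U α G1 x ≠ ∞ :=
      ne_top_of_le_ne_top hdt (h1.trans (min_le_right _ _))
    have : Top U α G1 x + G2 x ≤ Top U α G1 x + Top U α G2 x := by
      calc Top U α G1 x + G2 x ≤ G1 x + G2 x := add_le_add_left h1 _
        _ = Top U α G1 x + Top U α G2 x := heq
    exact ENNReal.le_of_add_le_add_left h1t this
  have hint2 : ∫⁻ x, G2 x ∂m ≠ ∞ :=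
    ne_top_of_le_ne_top hint (lintegral_mono (fun x => tsub_le_self))
  have hG2fix : Top U α G2 =ᵐ[m] G2 :=
    sandwich hG2m (Top_measurable hU hα hG2m) hG2ge hint2 (Top_subinv hm hα hG2m)
  filter_upwards [hfix, hG2fix, hG1le] with x hx h2 h1
  have heq : Top U α G1 x + Top U α G2 x = G1 x + G2 x := by rw [hTsplit x, hx, hsplit x]
  rw [h2] at heq
  have hG2t : G2 x ≠ ∞ := by
    simp only [hG2_def]
    exact ne_top_of_le_ne_top (hGt x) tsub_le_self
  exact (ENNReal.add_left_inj hG2t).mp heq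

/-- Step D (the `L²` core): a bounded integrable nonnegative `T`-fixed function is
`T̂`-fixed. -/
lemma stepD (hU : SubMarkovResolvent U) (hUhat : SubMarkovResolvent Uhat)
    (hm : SubInvariantMeasure m U) (hmhat : SubInvariantMeasure m Uhat)
    (hdual : WeakDuality m U Uhat) (hα : 0 < α)
    {G : E → ℝ≥0∞} (hGm : Measurable G) {d : ℝ≥0∞} (hd : d ≠ ∞)
    (hbd : ∀ x, G x ≤ d) (hint : ∫⁻ x, G x ∂m ≠ ∞) (hfix : Top U α G =ᵐ[m] G) :
    Top Uhat α G =ᵐ[m] G := by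
  haveI := isFiniteKernel hU hα
  haveI := isFiniteKernel hUhat hα
  set Gh : E → ℝ≥0∞ := Top Uhat α G with hGh_def
  have hGhm : Measurable Gh := Top_measurable hUhat hα hGm
  have hGhbd : ∀ x, Gh x ≤ d := fun x =>
    (Top_mono (fun y => hbd y) x).trans (Top_const_le hUhat hα d x)
  have hGhd : ∀ x, Gh x ≠ ∞ := fun x => ne_top_of_le_ne_top hd (hGhbd x)
  have hGd : ∀ x, G x ≠ ∞ := fun x => ne_top_of_le_ne_top hd (hbd x)
  have hsqm : Measurable (fun x => G x ^ 2) := hGm.pow_const 2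
  have hsq : ∫⁻ x, G x ^ 2 ∂m ≠ ∞ := by
    have : ∀ x, G x ^ 2 ≤ d * G x := by
      intro x; rw [pow_two]; exact mul_le_mul' (hbd x) le_rfl
    refine ne_top_of_le_ne_top ?_ (lintegral_mono this)
    rw [lintegral_const_mul d hGm]
    exact ENNReal.mul_ne_top hd hint
  -- D1: pointwise Jensen
  have D1 : ∀ x, Gh x ^ 2 ≤ Top Uhat α (fun y => G y ^ 2) x := by
    intro x
    have hcs := cs_lintegral (Uhat α x) hGm
    calc Gh x ^ 2 = ENNReal.ofReal α ^ 2 * (∫⁻ y, G y ∂(Uhat α x)) ^ 2 := by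
          rw [hGh_def, Top, mul_pow]
      _ ≤ ENNReal.ofReal α ^ 2 * ((Uhat α x) Set.univ * ∫⁻ y, G y ^ 2 ∂(Uhat α x)) :=
          mul_le_mul_right hcs _
      _ ≤ ENNReal.ofReal α ^ 2 * (ENNReal.ofReal α⁻¹ * ∫⁻ y, G y ^ 2 ∂(Uhat α x)) :=
          mul_le_mul_right (mul_le_mul_left (hUhat α hα x) _) _
      _ = (ENNReal.ofReal α * ENNReal.ofReal α⁻¹) *
            (ENNReal.ofReal α * ∫⁻ y, G y ^ 2 ∂(Uhat α x)) := by ring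
      _ = Top Uhat α (fun y => G y ^ 2) x := by rw [ofReal_mul_inv hα, one_mul]; rfl
  -- D2
  have D2 : ∫⁻ x, Gh x ^ 2 ∂m ≤ ∫⁻ x, G x ^ 2 ∂m :=
    (lintegral_mono D1).trans (Top_subinv hmhat hα hsqm)
  -- D3
  have D3 : ∫⁻ x, G x * Gh x ∂m = ∫⁻ x, G x ^ 2 ∂m := by
    have e1 : ∫⁻ x, G x * Gh x ∂m
        = ENNReal.ofReal α * ∫⁻ x, G x * ∫⁻ y, G y ∂(Uhat α x) ∂m := by
      rw [← lintegral_const_mul _ (f := fun x => G x * ∫⁻ y, G y ∂(Uhat α x)) (hGm.mul (hGm.lintegral_kernel (κ := Uhat α)))]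
      apply lintegral_congr; intro x
      simp only [hGh_def, Top]; ring
    have e2 : ∫⁻ x, G x * ∫⁻ y, G y ∂(Uhat α x) ∂m
        = ∫⁻ x, G x * ∫⁻ y, G y ∂(U α x) ∂m := (hdual α hα G G hGm hGm).symm
    have e3 : ENNReal.ofReal α * ∫⁻ x, G x * ∫⁻ y, G y ∂(U α x) ∂m
        = ∫⁻ x, G x * Top U α G x ∂m := by
      rw [← lintegral_const_mul _ (f := fun x => G x * ∫⁻ y, G y ∂(U α x)) (hGm.mul (hGm.lintegral_kernel (κ := U α)))]
      apply lintegral_congr; intro x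
      simp only [Top]; ring
    have e4 : ∫⁻ x, G x * Top U α G x ∂m = ∫⁻ x, G x ^ 2 ∂m := by
      apply lintegral_congr_ae
      filter_upwards [hfix] with x hx
      rw [hx, pow_two]
    rw [e1, e2, e3, e4]
  -- combine
  have hidentity : ∀ x, (G x - Gh x) ^ 2 + (Gh x - G x) ^ 2 + 2 * (G x * Gh x)
      = G x ^ 2 + Gh x ^ 2 := fun x => enn_sq (hGd x) (hGhd x)
  have hXm : Measurable (fun x => (G x - Gh x) ^ 2) := (hGm.sub hGhm).pow_const 2
  have hYm : Measurable (fun x => (Gh x - G x) ^ 2) := (hGhm.sub hGm).pow_const 2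
  have hsum : (∫⁻ x, (G x - Gh x) ^ 2 ∂m + ∫⁻ x, (Gh x - G x) ^ 2 ∂m)
      + 2 * ∫⁻ x, G x ^ 2 ∂m ≤ 0 + 2 * ∫⁻ x, G x ^ 2 ∂m := by
    rw [zero_add]
    calc (∫⁻ x, (G x - Gh x) ^ 2 ∂m + ∫⁻ x, (Gh x - G x) ^ 2 ∂m)
          + 2 * ∫⁻ x, G x ^ 2 ∂m
        = (∫⁻ x, (G x - Gh x) ^ 2 ∂m + ∫⁻ x, (Gh x - G x) ^ 2 ∂m)
          + 2 * ∫⁻ x, G x * Gh x ∂m := by rw [D3]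
      _ = ∫⁻ x, (G x - Gh x) ^ 2 + (Gh x - G x) ^ 2 + 2 * (G x * Gh x) ∂m := by
          rw [lintegral_add_left (f := fun x => (G x - Gh x) ^ 2 + (Gh x - G x) ^ 2) (hXm.add hYm), lintegral_add_left hXm,
            lintegral_const_mul _ (f := fun x => G x * Gh x) (hGm.mul hGhm)]
      _ = ∫⁻ x, G x ^ 2 + Gh x ^ 2 ∂m := lintegral_congr hidentity
      _ = ∫⁻ x, G x ^ 2 ∂m + ∫⁻ x, Gh x ^ 2 ∂m := lintegral_add_left hsqm _
      _ ≤ ∫⁻ x, G x ^ 2 ∂m + ∫⁻ x, G x ^ 2 ∂m := add_le_add_right D2 _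
      _ = 2 * ∫⁻ x, G x ^ 2 ∂m := (two_mul _).symm
  have h2fin : 2 * ∫⁻ x, G x ^ 2 ∂m ≠ ∞ := ENNReal.mul_ne_top (by norm_num) hsq
  have hXY : ∫⁻ x, (G x - Gh x) ^ 2 ∂m + ∫⁻ x, (Gh x - G x) ^ 2 ∂m = 0 :=
    le_antisymm (ENNReal.le_of_add_le_add_right h2fin hsum) (zero_le)
  have hX0 : ∫⁻ x, (G x - Gh x) ^ 2 ∂m = 0 := by
    rcases add_eq_zero.mp hXY with ⟨h1, _⟩; exact h1
  have hY0 : ∫⁻ x, (Gh x - G x) ^ 2 ∂m = 0 := by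
    rcases add_eq_zero.mp hXY with ⟨_, h2⟩; exact h2
  have haeX := (lintegral_eq_zero_iff hXm).mp hX0
  have haeY := (lintegral_eq_zero_iff hYm).mp hY0
  filter_upwards [haeX, haeY] with x hx hy
  simp only [Pi.zero_apply, pow_eq_zero_iff (two_ne_zero)] at hx hy
  exact le_antisymm (tsub_eq_zero_iff_le.mp hy) (tsub_eq_zero_iff_le.mp hx)


lemma ennnorm_split (r : ℝ) :
    (‖r‖₊ : ℝ≥0∞) = ENNReal.ofReal r + ENNReal.ofReal (-r) := by
  rcases le_total 0 r with h | h
  · have hz : ENNReal.ofReal (-r) = 0 := ENNReal.ofReal_eq_zero.mpr (by linarith)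
    rw [hz, add_zero]; exact Real.enorm_eq_ofReal h
  · have hz : ENNReal.ofReal r = 0 := ENNReal.ofReal_eq_zero.mpr h
    rw [hz, zero_add, ← nnnorm_neg]; exact Real.enorm_eq_ofReal (by linarith)

lemma iSup_min_nat {a : ℝ≥0∞} (ha : a ≠ ∞) : ⨆ k : ℕ, min a (k : ℝ≥0∞) = a := by
  apply le_antisymm (iSup_le fun k => min_le_left _ _)
  obtain ⟨k, hk⟩ := ENNReal.exists_nat_gt ha
  exact le_iSup_of_le k (le_of_eq (min_eq_left hk.le).symm)

lemma iInf_inv_nat_succ : ⨅ n : ℕ, ((n : ℝ≥0∞) + 1)⁻¹ = 0 := by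
  rw [← ENNReal.inv_iSup]
  have : ⨆ n : ℕ, ((n : ℝ≥0∞) + 1) = ∞ := by
    apply top_le_iff.mp
    rw [← ENNReal.iSup_natCast]
    exact iSup_mono (fun n => le_self_add)
  rw [this, ENNReal.inv_top]

/-- The key lemma: one direction, for a measurable representative. -/
lemma key (hU : SubMarkovResolvent U) (hUhat : SubMarkovResolvent Uhat)
    (hm : SubInvariantMeasure m U) (hmhat : SubInvariantMeasure m Uhat)
    (hdual : WeakDuality m U Uhat) (hα : 0 < α)
    {w : E → ℝ} (hwm : Measurable w)
    (hInt : ∀ n : ℕ, ∫⁻ x, ((‖w x‖₊ : ℝ≥0∞) - ((n : ℝ≥0∞) + 1)⁻¹) ∂m ≠ ∞)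
    (hfix : ∀ᵐ x ∂m, α * ∫ y, w y ∂(U α x) = w x) :
    ∀ᵐ x ∂m, α * ∫ y, w y ∂(Uhat α x) = w x := by
  haveI := isFiniteKernel hU hα
  haveI := isFiniteKernel hUhat hα
  have hα0 : ENNReal.ofReal α ≠ 0 := by simp [hα]
  set W : E → ℝ≥0∞ := fun x => ENNReal.ofReal (w x) with hW_def
  set W' : E → ℝ≥0∞ := fun x => ENNReal.ofReal (-(w x)) with hW'_def
  have hWm : Measurable W := ENNReal.measurable_ofReal.comp hwm
  have hW'm : Measurable W' := ENNReal.measurable_ofReal.comp hwm.neg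
  have hWt : ∀ x, W x ≠ ∞ := fun x => ENNReal.ofReal_ne_top
  have hW't : ∀ x, W' x ≠ ∞ := fun x => ENNReal.ofReal_ne_top
  have hNm : Measurable (fun x => (‖w x‖₊ : ℝ≥0∞)) := hwm.nnnorm.coe_nnreal_ennreal
  have hWle : ∀ x, W x ≤ (‖w x‖₊ : ℝ≥0∞) := fun x => Real.ofReal_le_enorm _
  have hW'le : ∀ x, W' x ≤ (‖w x‖₊ : ℝ≥0∞) := fun x => by
    rw [← nnnorm_neg]; exact Real.ofReal_le_enorm _
  -- a.e. integrability of ‖w‖ against U α x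
  have haeint : ∀ᵐ x ∂m, ∫⁻ y, (‖w y‖₊ : ℝ≥0∞) ∂(U α x) ≠ ∞ := by
    have h0 := hInt 0
    simp only [Nat.cast_zero, zero_add, inv_one] at h0
    have hsubm : Measurable (fun x => (‖w x‖₊ : ℝ≥0∞) - 1) := hNm.sub measurable_const
    have hfin : ∫⁻ x, Top U α (fun y => (‖w y‖₊ : ℝ≥0∞) - 1) x ∂m ≠ ∞ :=
      ne_top_of_le_ne_top h0 (Top_subinv hm hα hsubm)
    have hae := ae_lt_top (Top_measurable hU hα hsubm) hfin
    filter_upwards [hae] with x hx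
    have h1 : ∫⁻ y, ((‖w y‖₊ : ℝ≥0∞) - 1) ∂(U α x) ≠ ∞ := by
      intro ht
      rw [Top, ht, ENNReal.mul_top hα0] at hx
      exact (lt_irrefl _ hx).elim
    have h2 : ∫⁻ y, (‖w y‖₊ : ℝ≥0∞) ∂(U α x)
        ≤ ∫⁻ y, ((‖w y‖₊ : ℝ≥0∞) - 1) ∂(U α x) + (U α x) Set.univ := by
      calc ∫⁻ y, (‖w y‖₊ : ℝ≥0∞) ∂(U α x)
          ≤ ∫⁻ y, (((‖w y‖₊ : ℝ≥0∞) - 1) + 1) ∂(U α x) := lintegral_mono fun y => le_tsub_add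
        _ = ∫⁻ y, ((‖w y‖₊ : ℝ≥0∞) - 1) ∂(U α x) + ∫⁻ y, (1:ℝ≥0∞) ∂(U α x) :=
            lintegral_add_right _ measurable_const
        _ = _ := by rw [lintegral_one]
    exact ne_top_of_le_ne_top (ENNReal.add_ne_top.mpr
      ⟨h1, ne_top_of_le_ne_top ENNReal.ofReal_ne_top (hU α hα x)⟩) h2
  -- the a.e. structural package
  set h : E → ℝ≥0∞ := fun x => Top U α W x - W x with hh_def
  have hhm : Measurable h := (Top_measurable hU hα hWm).sub hWm
  have hpack : ∀ᵐ x ∂m, Top U α W x = W x + h x ∧ Top U α W' x = W' x + h x := by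
    filter_upwards [hfix, haeint] with x h1 h2
    have hIp : ∫⁻ y, W y ∂(U α x) ≠ ∞ :=
      ne_top_of_le_ne_top h2 (lintegral_mono fun y => hWle y)
    have hIn : ∫⁻ y, W' y ∂(U α x) ≠ ∞ :=
      ne_top_of_le_ne_top h2 (lintegral_mono fun y => hW'le y)
    have hintw : Integrable w (U α x) :=
      ⟨hwm.aestronglyMeasurable, lt_top_iff_ne_top.mpr h2⟩
    have heq := integral_eq_lintegral_pos_part_sub_lintegral_neg_part hintw
    set a : ℝ := α * (∫⁻ y, W y ∂(U α x)).toReal with ha_def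
    set b : ℝ := α * (∫⁻ y, W' y ∂(U α x)).toReal with hb_def
    have ha0 : 0 ≤ a := mul_nonneg hα.le ENNReal.toReal_nonneg
    have hb0 : 0 ≤ b := mul_nonneg hα.le ENNReal.toReal_nonneg
    have hab : a - b = w x := by
      rw [ha_def, hb_def, ← mul_sub, ← heq]; exact h1
    have hTa : Top U α W x = ENNReal.ofReal a := by
      rw [Top, ha_def, ENNReal.ofReal_mul hα.le, ENNReal.ofReal_toReal hIp]
    have hTb : Top U α W' x = ENNReal.ofReal b := by
      rw [Top, hb_def, ENNReal.ofReal_mul hα.le, ENNReal.ofReal_toReal hIn]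
    rcases le_total 0 (w x) with hw0 | hw0
    · have hW'x : W' x = 0 := ENNReal.ofReal_eq_zero.mpr (by linarith)
      have hhx : h x = ENNReal.ofReal b := by
        show Top U α W x - W x = ENNReal.ofReal b
        rw [hTa]
        show ENNReal.ofReal a - ENNReal.ofReal (w x) = ENNReal.ofReal b
        rw [← ENNReal.ofReal_sub a hw0]
        congr 1; linarith
      constructor
      · rw [hTa, hW_def, hhx, ← ENNReal.ofReal_add hw0 hb0]
        congr 1; linarith
      · rw [hTb, hW'x, hhx, zero_add]
    · have hWx : W x = 0 := ENNReal.ofReal_eq_zero.mpr hw0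
      have hhx : h x = ENNReal.ofReal a := by
        show Top U α W x - W x = ENNReal.ofReal a
        rw [hTa, hWx, tsub_zero]
      constructor
      · rw [hTa, hWx, hhx, zero_add]
      · rw [hTb, hW'_def, hhx, ← ENNReal.ofReal_add (by linarith) ha0]
        congr 1; linarith
  -- step B for W and W'
  have hcne : ∀ n : ℕ, ((n : ℝ≥0∞) + 1)⁻¹ ≠ ∞ := by
    intro n
    rw [Ne, ENNReal.inv_eq_top]
    exact fun hc => by simp at hc
  have hBW : ∀ n : ℕ, Top U α (fun x => W x - ((n : ℝ≥0∞) + 1)⁻¹)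
      =ᵐ[m] fun x => W x - ((n : ℝ≥0∞) + 1)⁻¹ := by
    intro n
    refine (stepB hU hm hα hWm hhm ?_ (hcne n) ?_).1
    · filter_upwards [hpack] with x hx; exact hx.1
    · exact ne_top_of_le_ne_top (hInt n) (lintegral_mono fun x =>
        tsub_le_tsub_right (hWle x) _)
  have hBW' : ∀ n : ℕ, Top U α (fun x => W' x - ((n : ℝ≥0∞) + 1)⁻¹)
      =ᵐ[m] fun x => W' x - ((n : ℝ≥0∞) + 1)⁻¹ := by
    intro n
    refine (stepB hU hm hα hW'm hhm ?_ (hcne n) ?_).1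
    · filter_upwards [hpack] with x hx; exact hx.2
    · exact ne_top_of_le_ne_top (hInt n) (lintegral_mono fun x =>
        tsub_le_tsub_right (hW'le x) _)
  -- steps C and D, then limits
  have main : ∀ (V : E → ℝ≥0∞), Measurable V → (∀ x, V x ≠ ∞) →
      (∀ x, V x ≤ (‖w x‖₊ : ℝ≥0∞)) →
      (∀ n : ℕ, Top U α (fun x => V x - ((n : ℝ≥0∞) + 1)⁻¹)
        =ᵐ[m] fun x => V x - ((n : ℝ≥0∞) + 1)⁻¹) →
      ∀ᵐ x ∂m, Top Uhat α V x = V x := by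
    intro V hVm hVt hVle hB
    have hVint : ∀ n : ℕ, ∫⁻ x, (V x - ((n : ℝ≥0∞) + 1)⁻¹) ∂m ≠ ∞ := fun n =>
      ne_top_of_le_ne_top (hInt n) (lintegral_mono fun x => tsub_le_tsub_right (hVle x) _)
    have hD : ∀ n k : ℕ, Top Uhat α (fun x => min (V x - ((n : ℝ≥0∞) + 1)⁻¹) (k : ℝ≥0∞))
        =ᵐ[m] fun x => min (V x - ((n : ℝ≥0∞) + 1)⁻¹) (k : ℝ≥0∞) := by
      intro n k
      have hGm : Measurable (fun x => V x - ((n : ℝ≥0∞) + 1)⁻¹) := hVm.sub measurable_const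
      have hC := stepC hU hm hα hGm (fun x => ne_top_of_le_ne_top (hVt x) tsub_le_self)
        (hVint n) (hB n) (ENNReal.natCast_ne_top k)
      exact stepD hU hUhat hm hmhat hdual hα (hGm.min measurable_const)
        (ENNReal.natCast_ne_top k) (fun x => min_le_right _ _)
        (ne_top_of_le_ne_top (hVint n) (lintegral_mono fun x => min_le_left _ _)) hC
    have hDall : ∀ᵐ x ∂m, ∀ n k : ℕ,
        Top Uhat α (fun y => min (V y - ((n : ℝ≥0∞) + 1)⁻¹) (k : ℝ≥0∞)) x
          = min (V x - ((n : ℝ≥0∞) + 1)⁻¹) (k : ℝ≥0∞) := by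
      rw [ae_all_iff]; intro n; rw [ae_all_iff]; intro k; exact hD n k
    filter_upwards [hDall] with x hx
    -- first take k → ∞
    have hk : ∀ n : ℕ, Top Uhat α (fun y => V y - ((n : ℝ≥0∞) + 1)⁻¹) x
        = V x - ((n : ℝ≥0∞) + 1)⁻¹ := by
      intro n
      set G : E → ℝ≥0∞ := fun y => V y - ((n : ℝ≥0∞) + 1)⁻¹ with hG_def
      have hGm : Measurable G := hVm.sub measurable_const
      have hGt : ∀ y, G y ≠ ∞ := fun y => ne_top_of_le_ne_top (hVt y) tsub_le_self
      have hmct : ∫⁻ y, G y ∂(Uhat α x) = ⨆ k : ℕ, ∫⁻ y, min (G y) (k : ℝ≥0∞) ∂(Uhat α x) := by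
        rw [← lintegral_iSup (fun k => hGm.min measurable_const)
          (fun i j hij y => min_le_min le_rfl (by exact_mod_cast Nat.cast_le.mpr hij))]
        apply lintegral_congr; intro y
        rw [iSup_min_nat (hGt y)]
      calc Top Uhat α G x = ENNReal.ofReal α * ∫⁻ y, G y ∂(Uhat α x) := rfl
        _ = ⨆ k : ℕ, ENNReal.ofReal α * ∫⁻ y, min (G y) (k : ℝ≥0∞) ∂(Uhat α x) := by
            rw [hmct, ENNReal.mul_iSup]
        _ = ⨆ k : ℕ, min (G x) (k : ℝ≥0∞) := by
            apply iSup_congr; intro k; exact hx n k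
        _ = G x := iSup_min_nat (hGt x)
    -- then n → ∞
    have hmono : Monotone (fun n : ℕ => fun y => V y - ((n : ℝ≥0∞) + 1)⁻¹) := by
      intro i j hij y
      exact tsub_le_tsub_left (ENNReal.inv_le_inv.mpr
        (add_le_add_left (by exact_mod_cast Nat.cast_le.mpr hij) 1)) _
    have hsupV : ∀ y, ⨆ n : ℕ, (V y - ((n : ℝ≥0∞) + 1)⁻¹) = V y := by
      intro y
      rw [← ENNReal.sub_iInf, iInf_inv_nat_succ, tsub_zero]
    have hmct2 : ∫⁻ y, V y ∂(Uhat α x)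
        = ⨆ n : ℕ, ∫⁻ y, (V y - ((n : ℝ≥0∞) + 1)⁻¹) ∂(Uhat α x) := by
      rw [← lintegral_iSup (f := fun n y => V y - ((n : ℝ≥0∞) + 1)⁻¹) (fun n => hVm.sub measurable_const) (fun i j hij y => hmono hij y)]
      apply lintegral_congr; intro y; rw [hsupV y]
    calc Top Uhat α V x = ENNReal.ofReal α * ∫⁻ y, V y ∂(Uhat α x) := rfl
      _ = ⨆ n : ℕ, ENNReal.ofReal α * ∫⁻ y, (V y - ((n : ℝ≥0∞) + 1)⁻¹) ∂(Uhat α x) := by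
          rw [hmct2, ENNReal.mul_iSup]
      _ = ⨆ n : ℕ, (V x - ((n : ℝ≥0∞) + 1)⁻¹) := by
          apply iSup_congr; intro n; exact hk n
      _ = V x := hsupV x
  have hTW : ∀ᵐ x ∂m, Top Uhat α W x = W x := main W hWm hWt hWle hBW
  have hTW' : ∀ᵐ x ∂m, Top Uhat α W' x = W' x := main W' hW'm hW't hW'le hBW'
  -- final conversion back to the Bochner integral
  filter_upwards [hTW, hTW'] with x h1 h2
  have hIp : ∫⁻ y, W y ∂(Uhat α x) ≠ ∞ := by
    intro ht
    rw [Top, ht, ENNReal.mul_top hα0] at h1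
    exact hWt x h1.symm
  have hIn : ∫⁻ y, W' y ∂(Uhat α x) ≠ ∞ := by
    intro ht
    rw [Top, ht, ENNReal.mul_top hα0] at h2
    exact hW't x h2.symm
  have hnorm : ∫⁻ y, (‖w y‖₊ : ℝ≥0∞) ∂(Uhat α x) ≠ ∞ := by
    have : ∫⁻ y, (‖w y‖₊ : ℝ≥0∞) ∂(Uhat α x)
        = ∫⁻ y, W y ∂(Uhat α x) + ∫⁻ y, W' y ∂(Uhat α x) := by
      rw [← lintegral_add_left hWm]
      apply lintegral_congr; intro y; exact ennnorm_split (w y)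
    rw [this]; exact ENNReal.add_ne_top.mpr ⟨hIp, hIn⟩
  have hintw : Integrable w (Uhat α x) := ⟨hwm.aestronglyMeasurable, lt_top_iff_ne_top.mpr hnorm⟩
  rw [integral_eq_lintegral_pos_part_sub_lintegral_neg_part hintw, mul_sub]
  have e1 : α * (∫⁻ y, ENNReal.ofReal (w y) ∂(Uhat α x)).toReal = (W x).toReal := by
    rw [← h1, Top, ENNReal.toReal_mul, ENNReal.toReal_ofReal hα.le]
  have e2 : α * (∫⁻ y, ENNReal.ofReal (-(w y)) ∂(Uhat α x)).toReal = (W' x).toReal := by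
    rw [← h2, Top, ENNReal.toReal_mul, ENNReal.toReal_ofReal hα.le]
  rw [e1, e2]
  rcases le_total 0 (w x) with hw0 | hw0
  · have hz : W' x = 0 := ENNReal.ofReal_eq_zero.mpr (by linarith)
    rw [hz]
    simp only [hW_def]
    rw [ENNReal.toReal_ofReal hw0]
    simp
  · have hz : W x = 0 := ENNReal.ofReal_eq_zero.mpr hw0
    rw [hz]
    simp only [hW'_def]
    rw [ENNReal.toReal_ofReal (by linarith : 0 ≤ -(w x))]
    simp


/-- The truncation integrability hypothesis follows from `Memℒp`. -/
lemma hInt_of_memLp {p : ℝ≥0∞} (hp1 : 1 ≤ p) (hp : p ≠ ∞) {w : E → ℝ}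
    (hwm : Measurable w) (hw : MemLp w p m) (n : ℕ) :
    ∫⁻ x, ((‖w x‖₊ : ℝ≥0∞) - ((n : ℝ≥0∞) + 1)⁻¹) ∂m ≠ ∞ := by
  have hp0 : p ≠ 0 := fun h0 => by simp [h0] at hp1
  have hp'1 : 1 ≤ p.toReal := by
    have := ENNReal.toReal_mono hp hp1
    simpa using this
  have hlt : ∫⁻ x, (‖w x‖₊ : ℝ≥0∞) ^ p.toReal ∂m < ∞ :=
    lintegral_rpow_enorm_lt_top_of_eLpNorm_lt_top hp0 hp hw.eLpNorm_lt_top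
  set c : ℝ≥0∞ := ((n : ℝ≥0∞) + 1)⁻¹ with hc_def
  have hc0 : c ≠ 0 := by
    rw [hc_def, Ne, ENNReal.inv_eq_zero]
    exact ENNReal.add_ne_top.mpr ⟨ENNReal.natCast_ne_top n, ENNReal.one_ne_top⟩
  have hct : c ≠ ∞ := by
    rw [hc_def, Ne, ENNReal.inv_eq_top]
    exact fun hc => by simp at hc
  have hK0 : c ^ (p.toReal - 1) ≠ 0 := by simp [ENNReal.rpow_eq_zero_iff, hc0, hct]
  have hptw : ∀ x, (‖w x‖₊ : ℝ≥0∞) - c ≤ (c ^ (p.toReal - 1))⁻¹ *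
      ((‖w x‖₊ : ℝ≥0∞)) ^ p.toReal := fun x =>
    sub_const_le_rpow hp'1 ENNReal.coe_ne_top hc0 hct
  have hchain : ∫⁻ x, ((‖w x‖₊ : ℝ≥0∞) - c) ∂m
      ≤ (c ^ (p.toReal - 1))⁻¹ * ∫⁻ x, ((‖w x‖₊ : ℝ≥0∞)) ^ p.toReal ∂m := by
    calc ∫⁻ x, ((‖w x‖₊ : ℝ≥0∞) - c) ∂m
        ≤ ∫⁻ x, (c ^ (p.toReal - 1))⁻¹ * ((‖w x‖₊ : ℝ≥0∞)) ^ p.toReal ∂m :=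
          lintegral_mono hptw
      _ = _ := lintegral_const_mul _ (hwm.nnnorm.coe_nnreal_ennreal.pow_const _)
  exact ne_top_of_le_ne_top
    (ENNReal.mul_ne_top (ENNReal.inv_ne_top.mpr hK0) hlt.ne) hchain

/-- One direction of the main theorem. -/
lemma one_direction
    (hU : SubMarkovResolvent U) (hUhat : SubMarkovResolvent Uhat)
    (hm : SubInvariantMeasure m U) (hmhat : SubInvariantMeasure m Uhat)
    (hdual : WeakDuality m U Uhat)
    {p : ℝ≥0∞} (hp1 : 1 ≤ p) (hp : p ≠ ∞)
    {u : E → ℝ} (hu : MemLp u p m)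
    (h : ∀ α > (0:ℝ), (fun x => α * ∫ y, u y ∂(U α x)) =ᵐ[m] u) :
    ∀ α > (0:ℝ), (fun x => α * ∫ y, u y ∂(Uhat α x)) =ᵐ[m] u := by
  intro α hα
  set w : E → ℝ := (hu.aestronglyMeasurable.mk u) with hw_def
  have hwm : Measurable w := hu.aestronglyMeasurable.stronglyMeasurable_mk.measurable
  have huw : u =ᵐ[m] w := hu.aestronglyMeasurable.ae_eq_mk
  have hwLp : MemLp w p m := hu.ae_eq huw
  have hInt := hInt_of_memLp hp1 hp hwm hwLp
  -- transfer the hypothesis to w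
  have hkerU : ∀ᵐ x ∂m, u =ᵐ[U α x] w := ae_ae_eq_kernel hU hm hα huw
  have hfixw : ∀ᵐ x ∂m, α * ∫ y, w y ∂(U α x) = w x := by
    filter_upwards [h α hα, hkerU, huw] with x h1 h2 h3
    rw [← integral_congr_ae h2, h1, ← h3]
  have hconc := key hU hUhat hm hmhat hdual hα hwm hInt hfixw
  -- transfer back to u
  have hkerUhat : ∀ᵐ x ∂m, u =ᵐ[Uhat α x] w := ae_ae_eq_kernel hUhat hmhat hα huw
  filter_upwards [hconc, hkerUhat, huw] with x h1 h2 h3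
  rw [integral_congr_ae h2, h1, ← h3]

end ResAux


/-- For sub-Markovian resolvents `U`, `Û` in weak duality w.r.t. the σ-finite
sub-invariant measure `m` and `u ∈ L^p(E,m)`, `1 ≤ p < ∞`: `α U_α u = u` m-a.e. for all
`α > 0` iff `α Û_α u = u` m-a.e. for all `α > 0`. -/
theorem resolvent_fixed_iff_dual_fixed
    {E : Type*} [MeasurableSpace E] (m : Measure E) [SigmaFinite m]
    (U Uhat : ℝ → Kernel E E)
    (hU : SubMarkovResolvent U) (hUhat : SubMarkovResolvent Uhat)
    (hm : SubInvariantMeasure m U) (hmhat : SubInvariantMeasure m Uhat)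
    (hdual : WeakDuality m U Uhat)
    (p : ℝ≥0∞) (hp1 : 1 ≤ p) (hp : p ≠ ∞)
    (u : E → ℝ) (hu : MemLp u p m) :
    (∀ α > (0:ℝ), (fun x => α * Uop U α u x) =ᵐ[m] u) ↔
      (∀ α > (0:ℝ), (fun x => α * Uop Uhat α u x) =ᵐ[m] u) := by
  constructor
  · intro h
    intro α hα
    exact ResAux.one_direction hU hUhat hm hmhat hdual hp1 hp hu h α hα
  · intro h
    have hdual' : WeakDuality m Uhat U := fun α hα f g hf hg => (hdual α hα g f hg hf).symm
    intro α hα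
    exact ResAux.one_direction hUhat hU hmhat hm hdual' hp1 hp hu h α hα
end

section
/- Let (P_t) be a Markovian transition semigroup with strongly continuous extension to L^1(E,m), where m is σ-finite and sub-invariant, with generator L_1 and co-generator L̂_1. A probability density ρ ∈ L^1(E,m) gives an invariant probability measure ρ·m for (P_t) if and only if ρ ∈ D(L̂_1) and L̂_1 ρ = 0. -/
open MeasureTheory ProbabilityTheory Filter
open scoped NNReal ENNReal

/-- Let `(P_t)` be a Markovian transition semigroup (given by Markov kernels
`κ t`) with σ-finite sub-invariant measure `m`, and let `(T_t)` be the dual semigroup on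
`L¹(m)` (`∫ (P_t f) g dm = ∫ f (T_t g) dm`), strongly continuous, with generator `L̂₁`.
A probability density `ρ ∈ L¹(m)` gives an invariant probability measure `ρ·m` for `(P_t)`
iff `ρ ∈ D(L̂₁)` and `L̂₁ ρ = 0`, i.e. `t⁻¹(T_t ρ − ρ) → 0` strongly as `t → 0⁺`. -/
theorem invariant_density_iff_coharmonic
    {E : Type*} [MeasurableSpace E] (m : Measure E) [SigmaFinite m]
    (κ : ℝ → Kernel E E) [∀ t, IsMarkovKernel (κ t)]
    (hκ0 : κ 0 = Kernel.id)
    (hκsemi : ∀ s ≥ (0:ℝ), ∀ t ≥ (0:ℝ), κ (s + t) = (κ s).comp (κ t))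
    (hsub : ∀ t ≥ (0:ℝ), ∀ f : E → ℝ≥0∞, Measurable f →
      ∫⁻ x, ∫⁻ y, f y ∂(κ t x) ∂m ≤ ∫⁻ x, f x ∂m)
    (T : ℝ → (Lp ℝ 1 m →L[ℝ] Lp ℝ 1 m))
    (hT0 : T 0 = ContinuousLinearMap.id ℝ (Lp ℝ 1 m))
    (hTsemi : ∀ s ≥ (0:ℝ), ∀ t ≥ (0:ℝ), T (s + t) = (T s).comp (T t))
    (hTsc : ∀ g : Lp ℝ 1 m,
      Tendsto (fun t => T t g) (nhdsWithin 0 (Set.Ici (0:ℝ))) (nhds g))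
    (hdual : ∀ t ≥ (0:ℝ), ∀ f : E → ℝ, Measurable f → (∃ C, ∀ x, |f x| ≤ C) →
      ∀ g : Lp ℝ 1 m, ∫ x, (∫ y, f y ∂(κ t x)) * g x ∂m = ∫ x, f x * (T t g) x ∂m)
    (ρ : Lp ℝ 1 m) (hρ0 : 0 ≤ᵐ[m] (ρ : E → ℝ)) (hρ1 : ∫ x, ρ x ∂m = 1) :
    (∀ t ≥ (0:ℝ), ∀ f : E → ℝ, Measurable f → (∃ C, ∀ x, |f x| ≤ C) →
        ∫ x, (∫ y, f y ∂(κ t x)) * ρ x ∂m = ∫ x, f x * ρ x ∂m) ↔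
      Tendsto (fun t : ℝ => t⁻¹ • (T t ρ - ρ)) (nhdsWithin 0 (Set.Ioi (0:ℝ))) (nhds 0) := by
  -- sign trick
  have sign_int : ∀ w : Lp ℝ 1 m, ∃ f : E → ℝ, Measurable f ∧ (∀ x, |f x| ≤ 1) ∧
      ∫ x, f x * w x ∂m = ‖w‖ := by
    intro w
    have hb := (Lp.aestronglyMeasurable w)
    refine ⟨fun x => if 0 ≤ hb.mk w x then 1 else -1,
      Measurable.ite (measurableSet_le measurable_const hb.measurable_mk)
        measurable_const measurable_const, fun x => by dsimp only; split <;> simp, ?_⟩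
    have h1 : ∫ x, (if 0 ≤ hb.mk w x then (1:ℝ) else -1) * w x ∂m
        = ∫ x, (if 0 ≤ hb.mk w x then (1:ℝ) else -1) * hb.mk w x ∂m := by
      refine integral_congr_ae ?_
      filter_upwards [hb.ae_eq_mk] with x hx
      rw [hx]
    have h2 : ∀ x, (if 0 ≤ hb.mk w x then (1:ℝ) else -1) * hb.mk w x = |hb.mk w x| := by
      intro x
      by_cases h : 0 ≤ hb.mk w x
      · rw [if_pos h, one_mul, abs_of_nonneg h]
      · rw [if_neg h, neg_one_mul, abs_of_neg (lt_of_not_ge h)]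
    rw [h1]
    simp only [h2]
    rw [L1.norm_eq_integral_norm]
    refine integral_congr_ae ?_
    filter_upwards [hb.ae_eq_mk] with x hx
    rw [Real.norm_eq_abs, hx]
  -- contraction
  have hcontr : ∀ t ≥ (0:ℝ), ∀ g : Lp ℝ 1 m, ‖T t g‖ ≤ ‖g‖ := by
    intro t ht g
    obtain ⟨f, hfm, hfb, hfi⟩ := sign_int (T t g)
    rw [← hfi, ← hdual t ht f hfm ⟨1, hfb⟩ g]
    calc ∫ x, (∫ y, f y ∂κ t x) * g x ∂m
        ≤ ∫ x, |∫ y, f y ∂κ t x| * |g x| ∂m := by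
          refine le_trans (le_abs_self _) ?_
          simpa [Real.norm_eq_abs, abs_mul] using
            norm_integral_le_integral_norm (μ := m) (f := fun x => (∫ y, f y ∂κ t x) * g x)
      _ ≤ ∫ x, |g x| ∂m := by
          refine integral_mono_of_nonneg
            (Eventually.of_forall fun x => mul_nonneg (abs_nonneg _) (abs_nonneg _))
            (L1.integrable_coeFn g).abs (Eventually.of_forall fun x => ?_)
          dsimp only
          refine mul_le_of_le_one_left (abs_nonneg _) ?_
          have := norm_integral_le_of_norm_le_const (μ := κ t x) (f := f) (C := 1)
            (Eventually.of_forall fun y => by simpa [Real.norm_eq_abs] using hfb y)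
          simpa [Real.norm_eq_abs, measure_univ] using this
      _ = ‖g‖ := by
          rw [L1.norm_eq_integral_norm]
          simp [Real.norm_eq_abs]
  -- bounded measurable times L1 is integrable
  have hint : ∀ (f : E → ℝ), Measurable f → (∀ x, |f x| ≤ 1) → ∀ g : Lp ℝ 1 m,
      Integrable (fun x => f x * g x) m := by
    intro f hfm hfb g
    exact (L1.integrable_coeFn g).bdd_mul hfm.aestronglyMeasurable
      (Eventually.of_forall fun x => by simpa [Real.norm_eq_abs] using hfb x)
  constructor
  · -- invariance → derivative zero
    intro H
    have hfix : ∀ t ≥ (0:ℝ), T t ρ = ρ := by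
      intro t ht
      obtain ⟨f, hfm, hfb, hfi⟩ := sign_int (T t ρ - ρ)
      have h1 : ∫ x, f x * (T t ρ) x ∂m = ∫ x, f x * ρ x ∂m := by
        rw [← hdual t ht f hfm ⟨1, hfb⟩ ρ]
        exact H t ht f hfm ⟨1, hfb⟩
      have h2 : ∫ x, f x * ((T t ρ - ρ : Lp ℝ 1 m) : E → ℝ) x ∂m = 0 := by
        have hc : ∫ x, f x * ((T t ρ - ρ : Lp ℝ 1 m) : E → ℝ) x ∂m
            = ∫ x, (f x * (T t ρ) x - f x * ρ x) ∂m := by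
          refine integral_congr_ae ?_
          filter_upwards [Lp.coeFn_sub (T t ρ) ρ] with x hx
          rw [hx, Pi.sub_apply, mul_sub]
        rw [hc, integral_sub (hint f hfm hfb _) (hint f hfm hfb _), h1, sub_self]
      have : ‖T t ρ - ρ‖ = 0 := by rw [← hfi]; exact h2
      exact sub_eq_zero.mp (norm_eq_zero.mp this)
    refine Tendsto.congr' ?_ tendsto_const_nhds
    filter_upwards [eventually_mem_nhdsWithin] with t (ht : t ∈ Set.Ioi (0:ℝ))
    rw [hfix t (le_of_lt ht), sub_self, smul_zero]
  · -- derivative zero → invariance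
    intro H
    have hstep : ∀ s ≥ (0:ℝ), ∀ t ≥ (0:ℝ), ‖T (s + t) ρ - T s ρ‖ ≤ ‖T t ρ - ρ‖ := by
      intro s hs t ht
      have h : T (s + t) ρ - T s ρ = T s (T t ρ - ρ) := by
        rw [hTsemi s hs t ht, map_sub]; rfl
      rw [h]
      exact hcontr s hs _
    have hkey : ∀ x y : ℝ, 0 ≤ x → x ≤ y →
        dist (T y ρ) (T x ρ) ≤ dist (T (y - x) ρ) ρ := by
      intro x y hx hxy
      have h1 : x + (y - x) = y := by ring
      have := hstep x hx (y - x) (sub_nonneg.mpr hxy)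
      rw [h1] at this
      simpa [dist_eq_norm] using this
    have hfix : ∀ t ≥ (0:ℝ), T t ρ = ρ := by
      intro b hb
      rcases eq_or_lt_of_le hb with h0 | _
      · rw [← h0, hT0]; rfl
      have hcont : ContinuousOn (fun s => T s ρ) (Set.Icc 0 b) := by
        intro x hx
        rw [Metric.continuousWithinAt_iff]
        intro ε hε
        obtain ⟨δ, hδ, hδ'⟩ := Metric.tendsto_nhdsWithin_nhds.mp (hTsc ρ) ε hε
        refine ⟨δ, hδ, fun {y} hy hdy => ?_⟩
        rcases le_total x y with hxy | hxy
        · refine lt_of_le_of_lt (hkey x y hx.1 hxy) (hδ' (sub_nonneg.mpr hxy) ?_)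
          rw [Real.dist_eq, sub_zero, abs_of_nonneg (sub_nonneg.mpr hxy)]
          rw [Real.dist_eq] at hdy
          calc y - x ≤ |y - x| := le_abs_self _
            _ = |x - y| := abs_sub_comm y x
            _ < δ := by rw [abs_sub_comm]; exact hdy
        · rw [dist_comm]
          refine lt_of_le_of_lt (hkey y x hy.1 hxy) (hδ' (sub_nonneg.mpr hxy) ?_)
          rw [Real.dist_eq, sub_zero, abs_of_nonneg (sub_nonneg.mpr hxy)]
          rw [Real.dist_eq] at hdy
          calc x - y ≤ |x - y| := le_abs_self _
            _ = |y - x| := abs_sub_comm x y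
            _ < δ := hdy
      have hderiv : ∀ x ∈ Set.Ico (0:ℝ) b,
          HasDerivWithinAt (fun s => T s ρ) 0 (Set.Ici x) x := by
        intro x hx
        rw [hasDerivWithinAt_iff_tendsto_slope,
          show Set.Ici x \ {x} = Set.Ioi x by ext y; simp [lt_iff_le_and_ne, eq_comm]]
        have h1 : Tendsto (fun y => y - x) (nhdsWithin x (Set.Ioi x))
            (nhdsWithin 0 (Set.Ioi 0)) := by
          apply tendsto_nhdsWithin_of_tendsto_nhds_of_eventually_within
          · have h : Tendsto (fun y : ℝ => y - x) (nhds x) (nhds (x - x)) :=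
              (continuous_id.sub continuous_const).tendsto x
            rw [sub_self] at h
            exact h.mono_left nhdsWithin_le_nhds
          · filter_upwards [eventually_mem_nhdsWithin] with y (hy : y ∈ Set.Ioi x)
            exact Set.mem_Ioi.mpr (sub_pos.mpr (Set.mem_Ioi.mp hy))
        have h2 := H.comp h1
        have h3 : Tendsto (fun y => T x ((y - x)⁻¹ • (T (y - x) ρ - ρ)))
            (nhdsWithin x (Set.Ioi x)) (nhds (T x 0)) :=
          ((T x).continuous.tendsto 0).comp h2
        rw [map_zero] at h3
        refine Tendsto.congr' ?_ h3
        filter_upwards [eventually_mem_nhdsWithin] with y (hy : y ∈ Set.Ioi x)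
        have hyx : x + (y - x) = y := by ring
        have hT : T y ρ = T x (T (y - x) ρ) := by
          conv_lhs => rw [← hyx, hTsemi x hx.1 (y - x) (le_of_lt (sub_pos.mpr hy))]
          rfl
        rw [slope_def_module, hT, ← ContinuousLinearMap.map_sub, ← ContinuousLinearMap.map_smul]
      have := constant_of_has_deriv_right_zero hcont hderiv b ⟨hb, le_refl b⟩
      simp only [hT0] at this
      simpa using this
    intro t ht f hfm hfb
    rw [hdual t ht f hfm hfb ρ, hfix t ht]
end
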